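/- arXiv:2205.09955 — 9 statements merged into one kernel-verified Lean document; each statement's English description precedes it below -/
import Mathlib

section
/- Let G be a connected simple graph, let D be an orientation of G, and let a ≥ 1 be a real number. Then R⁰_{a+1}(D) ≤ R⁰_{a+1}(G)/2, with equality if and only if D is a sink-source orientation of G. -/
lemma rpow_add_rpow_le' {x y p : ℝ} (hx : 0 ≤ x) (hy : 0 ≤ y) (hp : 1 < p) :
    x ^ p + y ^ p ≤ (x + y) ^ p ∧ (x ^ p + y ^ p = (x + y) ^ p ↔ x = 0 ∨ y = 0) := by
  have hp0 : p ≠ 0 := by linarith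
  rcases eq_or_lt_of_le hx with hx0 | hx0
  · simp [← hx0, Real.zero_rpow hp0]
  rcases eq_or_lt_of_le hy with hy0 | hy0
  · simp [← hy0, Real.zero_rpow hp0]
  have hxy : 0 < x + y := by linarith
  have e1 : x ^ p = x * x ^ (p - 1) := by
    rw [show p = 1 + (p - 1) by ring, Real.rpow_add hx0, Real.rpow_one]; ring_nf
  have e2 : y ^ p = y * y ^ (p - 1) := by
    rw [show p = 1 + (p - 1) by ring, Real.rpow_add hy0, Real.rpow_one]; ring_nf
  have e3 : (x + y) ^ p = (x + y) * (x + y) ^ (p - 1) := by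
    rw [show p = 1 + (p - 1) by ring, Real.rpow_add hxy, Real.rpow_one]; ring_nf
  have m1 : x ^ (p - 1) < (x + y) ^ (p - 1) :=
    Real.rpow_lt_rpow hx (by linarith) (by linarith)
  have m2 : y ^ (p - 1) < (x + y) ^ (p - 1) :=
    Real.rpow_lt_rpow hy (by linarith) (by linarith)
  have hlt : x ^ p + y ^ p < (x + y) ^ p := by
    rw [e1, e2, e3]; nlinarith
  refine ⟨hlt.le, ?_, ?_⟩
  · intro h; exact absurd h hlt.ne
  · rintro (h | h) <;> exact absurd h (by positivity)



/-- An orientation of a simple graph `G`: each edge `{u,v}` is replaced by exactly one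
of the arcs `(u,v)` or `(v,u)`. -/
structure SimpleGraph.Orientation {V : Type*} (G : SimpleGraph V) where
  /-- the arc relation of the orientation -/
  arc : V → V → Prop
  adj_of_arc : ∀ u v, arc u v → G.Adj u v
  arc_total : ∀ u v, G.Adj u v → arc u v ∨ arc v u
  arc_asymm : ∀ u v, arc u v → ¬ arc v u

namespace SimpleGraph.Orientation

variable {V : Type*} {G : SimpleGraph V} (D : G.Orientation)

/-- The out-degree of a vertex in the orientation. -/
noncomputable def outDeg (u : V) : ℕ := Set.ncard {v | D.arc u v}

/-- The in-degree of a vertex in the orientation. -/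
noncomputable def inDeg (v : V) : ℕ := Set.ncard {u | D.arc u v}

/-- An orientation is sink-source if every vertex has out-degree 0 or in-degree 0. -/
def IsSinkSource : Prop := ∀ v : V, D.outDeg v = 0 ∨ D.inDeg v = 0

open scoped Classical in
/-- The zeroth-order general Randić index `R⁰_{a+1}(D)` of an orientation:
`(1/2) ∑_{(u,v) arc} ((d⁺ u)^a + (d⁻ v)^a)`. -/
noncomputable def randic [Fintype V] (a : ℝ) : ℝ :=
  (1 / 2) * ∑ p ∈ Finset.univ.filter (fun p : V × V => D.arc p.1 p.2),
    ((D.outDeg p.1 : ℝ) ^ a + (D.inDeg p.2 : ℝ) ^ a)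

end SimpleGraph.Orientation

namespace SimpleGraph.Orientation

variable {V : Type*} {G : SimpleGraph V} (D : G.Orientation)

lemma deg_eq [Fintype V] (v : V) :
    (G.neighborSet v).ncard = D.outDeg v + D.inDeg v := by
  have h1 : G.neighborSet v = {u | D.arc v u} ∪ {u | D.arc u v} := by
    ext u
    simp only [SimpleGraph.mem_neighborSet, Set.mem_union, Set.mem_setOf_eq]
    constructor
    · exact fun h => D.arc_total v u h
    · rintro (h | h)
      · exact D.adj_of_arc _ _ h
      · exact (D.adj_of_arc _ _ h).symm
  have hdis : Disjoint {u | D.arc v u} {u | D.arc u v} := by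
    rw [Set.disjoint_left]
    intro u h1 h2
    exact D.arc_asymm v u h1 h2
  rw [h1, Set.ncard_union_eq hdis (Set.toFinite _) (Set.toFinite _)]
  rfl

open Finset in
lemma randic_eq [Fintype V] (a : ℝ) (ha : 1 ≤ a) :
    D.randic a = (1 / 2) * ∑ v : V,
      ((D.outDeg v : ℝ) ^ (a + 1) + (D.inDeg v : ℝ) ^ (a + 1)) := by
  classical
  have hcast : ∀ n : ℕ, (n : ℝ) ^ (a + 1) = n * (n : ℝ) ^ a := by
    intro n
    rcases Nat.eq_zero_or_pos n with h | h
    · simp [h, Real.zero_rpow (show a + 1 ≠ 0 by linarith),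
        Real.zero_rpow (show a ≠ 0 by linarith)]
    · rw [Real.rpow_add (by exact_mod_cast h), Real.rpow_one]; ring
  have hout : ∀ u : V, D.outDeg u = (univ.filter fun v => D.arc u v).card := by
    intro u
    rw [SimpleGraph.Orientation.outDeg, Set.ncard_eq_toFinset_card', Set.toFinset_setOf]
  have hin : ∀ v : V, D.inDeg v = (univ.filter fun u => D.arc u v).card := by
    intro v
    rw [SimpleGraph.Orientation.inDeg, Set.ncard_eq_toFinset_card', Set.toFinset_setOf]
  rw [SimpleGraph.Orientation.randic]
  congr 1
  rw [Finset.sum_add_distrib, Finset.sum_add_distrib]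
  congr 1
  · rw [Finset.sum_filter, Fintype.sum_prod_type]
    refine Finset.sum_congr rfl fun u _ => ?_
    simp only [Finset.sum_const, nsmul_eq_mul]
    rw [← Finset.sum_filter, Finset.sum_const, nsmul_eq_mul, ← hout u, hcast]
  · rw [Finset.sum_filter, Fintype.sum_prod_type_right]
    refine Finset.sum_congr rfl fun v _ => ?_
    simp only [Finset.sum_const, nsmul_eq_mul]
    rw [← Finset.sum_filter, Finset.sum_const, nsmul_eq_mul, ← hin v, hcast]

end SimpleGraph.Orientation

/-- The zeroth-order general Randić index `R⁰_{a+1}(G) = ∑_v d_G(v)^(a+1)` of a graph. -/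
noncomputable def SimpleGraph.randic {V : Type*} [Fintype V] (G : SimpleGraph V) (a : ℝ) : ℝ :=
  ∑ v : V, ((G.neighborSet v).ncard : ℝ) ^ (a + 1)

/-- For a connected simple graph `G`, any orientation `D` of `G` and any
real `a ≥ 1`, one has `R⁰_{a+1}(D) ≤ R⁰_{a+1}(G)/2`, with equality iff `D` is a
sink-source orientation of `G`. -/
theorem orientation_randic_le_half_graph_randic
    {V : Type*} [Fintype V] (G : SimpleGraph V) (hconn : G.Connected)
    (D : G.Orientation) (a : ℝ) (ha : 1 ≤ a) :
    D.randic a ≤ G.randic a / 2 ∧ (D.randic a = G.randic a / 2 ↔ D.IsSinkSource) := by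
  classical
  set f : V → ℝ := fun v => (D.outDeg v : ℝ) ^ (a + 1) + (D.inDeg v : ℝ) ^ (a + 1) with hf
  set g : V → ℝ := fun v => ((G.neighborSet v).ncard : ℝ) ^ (a + 1) with hg
  have hD : D.randic a = (1 / 2) * ∑ v, f v := D.randic_eq a ha
  have hG : G.randic a / 2 = (1 / 2) * ∑ v, g v := by
    rw [SimpleGraph.randic]; ring
  have hkey : ∀ v : V, f v ≤ g v ∧ (f v = g v ↔ D.outDeg v = 0 ∨ D.inDeg v = 0) := by
    intro v
    have h := rpow_add_rpow_le' (x := (D.outDeg v : ℝ)) (y := (D.inDeg v : ℝ))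
      (p := a + 1) (Nat.cast_nonneg _) (Nat.cast_nonneg _) (by linarith)
    have hgv : g v = ((D.outDeg v : ℝ) + (D.inDeg v : ℝ)) ^ (a + 1) := by
      rw [hg]; simp only [D.deg_eq v]; push_cast; ring_nf
    rw [hf, hgv]
    simpa using h
  have hle : ∑ v, f v ≤ ∑ v, g v := Finset.sum_le_sum fun v _ => (hkey v).1
  constructor
  · rw [hD, hG]; linarith
  · rw [hD, hG]
    constructor
    · intro h
      have hsum : ∑ v, f v = ∑ v, g v := by linarith
      rw [Finset.sum_eq_sum_iff_of_le (fun v _ => (hkey v).1)] at hsum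
      intro v
      exact (hkey v).2.mp (hsum v (Finset.mem_univ v))
    · intro h
      have hsum : ∑ v, f v = ∑ v, g v :=
        Finset.sum_congr rfl fun v _ => (hkey v).2.mpr (h v)
      rw [hsum]
end

section
/- Let G be a cactus with n ≥ 6 vertices and r ≥ 2 cycles in which every vertex has degree at least 2. Suppose u₀u₁ is an edge of G with d_G(u₀) = d_G(u₁) = 2, let u₂ be the neighbor of u₀ other than u₁ with d_G(u₂) = d ≥ 3, and suppose u₁u₂ is not an edge of G. Let G' = G − u₀ + u₁u₂. Let D be an orientation of G and let D' be an orientation of G' that orients every edge of G − u₀ in the same direction as D. Then for every real a ≥ 1, R⁰_{a+1}(D) − R⁰_{a+1}(D') ≤ (1/2)·[2^{a+1} − 1 + d^{a+1} − (d−1)^{a+1}]. -/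
/-- A cactus: a connected simple graph in which any two distinct cycles share at most
one vertex (cycles are identified with their edge sets). -/
def SimpleGraph.IsCactus {V : Type*} [DecidableEq V] (G : SimpleGraph V) : Prop :=
  G.Connected ∧ ∀ (u v : V) (c : G.Walk u u) (c' : G.Walk v v),
    c.IsCycle → c'.IsCycle → c.edges.toFinset ≠ c'.edges.toFinset →
      (c.support.toFinset ∩ c'.support.toFinset).card ≤ 1


lemma rpow_diff_mono {b x y : ℝ} (hb : 1 ≤ b) (hx : 0 ≤ x) (hxy : x ≤ y) :
    (x+1)^b - x^b ≤ (y+1)^b - y^b := by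
  rcases eq_or_lt_of_le hxy with rfl | hlt
  · exact le_refl _
  have hy : 0 ≤ y := le_trans hx hxy
  have hcv := convexOn_rpow hb
  have h1 := hcv.secant_mono (a := x) (x := x+1) (y := y+1)
      (Set.mem_Ici.2 hx) (Set.mem_Ici.2 (by linarith)) (Set.mem_Ici.2 (by linarith))
      (by linarith) (by linarith) (by linarith)
  have h2 := hcv.secant_mono (a := y+1) (x := x) (y := y)
      (Set.mem_Ici.2 (by linarith)) (Set.mem_Ici.2 hx) (Set.mem_Ici.2 hy)
      (by linarith) (by linarith) hxy
  have e1 : (x+1-x) = (1:ℝ) := by ring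
  rw [e1, div_one] at h1
  have e2 : ((x:ℝ)^b - (y+1)^b)/(x-(y+1)) = ((y+1)^b - x^b)/(y+1-x) := by
    rw [div_eq_div_iff (by linarith) (by linarith)]; ring
  have e3 : ((y:ℝ)^b - (y+1)^b)/(y-(y+1)) = (y+1)^b - y^b := by
    rw [show y - (y+1) = -1 by ring, div_neg, div_one]; ring
  rw [e2, e3] at h2
  linarith

lemma rpow_one_le_diff {b x : ℝ} (hb : 1 ≤ b) (hx : 0 ≤ x) :
    1 ≤ (x+1)^b - x^b := by
  have := rpow_diff_mono hb (le_refl (0:ℝ)) hx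
  rw [zero_add, Real.one_rpow, Real.zero_rpow (by linarith)] at this
  linarith

lemma key_ineq (b : ℝ) (hb : 2 ≤ b) (d s t p q : ℕ) (hd : 3 ≤ d)
    (hst : s + t + 1 = d) (hpq : p + q = 1)
    (γ α β : ℝ) (hγ : γ = 0 ∨ γ = 1) (hα : α = 0 ∨ α = 1) (hβ : β = 0 ∨ β = 1) :
    (2-γ-α)^b + (γ+α)^b
    + ((p:ℝ)+γ)^b + ((q:ℝ)+(1-γ))^b - ((p:ℝ)+(1-β))^b - ((q:ℝ)+β)^b
    + ((s:ℝ)+α)^b + ((t:ℝ)+(1-α))^b - ((s:ℝ)+β)^b - ((t:ℝ)+(1-β))^b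
    ≤ 2^b - 1 + (d:ℝ)^b - ((d:ℝ)-1)^b := by
  have hb1 : (1:ℝ) ≤ b := by linarith
  have hsd : (s:ℝ) + t + 1 = d := by exact_mod_cast congrArg (Nat.cast : ℕ → ℝ) hst
  have hs0 : (0:ℝ) ≤ s := Nat.cast_nonneg s
  have ht0 : (0:ℝ) ≤ t := Nat.cast_nonneg t
  have hds : (s:ℝ) ≤ (d:ℝ) - 1 := by linarith
  have hdt : (t:ℝ) ≤ (d:ℝ) - 1 := by linarith
  have hdd : ((d:ℝ) - 1) + 1 = d := by ring
  have F1 : ((s:ℝ)+1)^b - (s:ℝ)^b ≤ (d:ℝ)^b - ((d:ℝ)-1)^b := by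
    have := rpow_diff_mono hb1 hs0 hds; rwa [hdd] at this
  have F1' : ((t:ℝ)+1)^b - (t:ℝ)^b ≤ (d:ℝ)^b - ((d:ℝ)-1)^b := by
    have := rpow_diff_mono hb1 ht0 hdt; rwa [hdd] at this
  have F2 : (1:ℝ) ≤ ((t:ℝ)+1)^b - (t:ℝ)^b := rpow_one_le_diff hb1 ht0
  have F2' : (1:ℝ) ≤ ((s:ℝ)+1)^b - (s:ℝ)^b := rpow_one_le_diff hb1 hs0
  have F3 : (2:ℝ)^b - 1 ≤ (d:ℝ)^b - ((d:ℝ)-1)^b := by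
    have h1d : (1:ℝ) ≤ (d:ℝ) - 1 := by
      have : (3:ℝ) ≤ d := by exact_mod_cast hd
      linarith
    have := rpow_diff_mono hb1 (by norm_num) h1d
    rw [hdd] at this; norm_num at this; linarith
  have F4 : (2:ℝ) ≤ 2^b := by
    have := Real.rpow_le_rpow_of_exponent_le (by norm_num : (1:ℝ) ≤ 2) hb1
    rwa [Real.rpow_one] at this
  have hb0 : b ≠ 0 := by linarith
  have hq : (p = 0 ∧ q = 1) ∨ (p = 1 ∧ q = 0) := by omega
  rcases hq with ⟨rfl, rfl⟩ | ⟨rfl, rfl⟩ <;>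
    rcases hγ with rfl | rfl <;> rcases hα with rfl | rfl <;> rcases hβ with rfl | rfl <;>
    · norm_num [Real.zero_rpow hb0, Real.one_rpow]
      linarith

section Helpers
variable {V : Type*} [Fintype V]

lemma ncard_ite_split (P : V → Prop) (w : V) [Decidable (P w)] :
    {x | P x}.ncard = {x | P x ∧ x ≠ w}.ncard + (if P w then 1 else 0) := by
  classical
  by_cases h : P w
  · rw [if_pos h]
    have he : {x | P x} = insert w {x | P x ∧ x ≠ w} := by
      ext x; by_cases hx : x = w <;> simp [hx, h]
    rw [he, Set.ncard_insert_of_notMem (by simp) (Set.toFinite _)]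
  · rw [if_neg h, add_zero]
    congr 1
    ext x; by_cases hx : x = w <;> simp [hx, h]

lemma ncard_two_split (P : V → Prop) (w₁ w₂ : V) [Decidable (P w₁)] [Decidable (P w₂)]
    (hw : w₂ ≠ w₁) (hsub : ∀ x, P x → x = w₁ ∨ x = w₂) :
    {x | P x}.ncard = (if P w₁ then 1 else 0) + (if P w₂ then 1 else 0) := by
  classical
  have e1 := ncard_ite_split P w₁
  have e2 := ncard_ite_split (fun x => P x ∧ x ≠ w₁) w₂
  have e3 : {x | (P x ∧ x ≠ w₁) ∧ x ≠ w₂} = (∅ : Set V) := by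
    ext x
    simp only [Set.mem_setOf_eq, Set.mem_empty_iff_false, iff_false]
    rintro ⟨⟨h1, h2⟩, h3⟩
    rcases hsub x h1 with rfl | rfl
    · exact h2 rfl
    · exact h3 rfl
  have e2' : {x | P x ∧ x ≠ w₁}.ncard = (if P w₂ then 1 else 0) := by
    rw [show {x | P x ∧ x ≠ w₁} = {x | (fun x => P x ∧ x ≠ w₁) x} from rfl, e2]
    rw [show {x | (fun x => P x ∧ x ≠ w₁) x ∧ x ≠ w₂} = {x | (P x ∧ x ≠ w₁) ∧ x ≠ w₂} from rfl, e3]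
    simp only [Set.ncard_empty, zero_add]
    have : (P w₂ ∧ w₂ ≠ w₁) ↔ P w₂ := and_iff_left hw
    rw [if_congr this rfl rfl]
  rw [e1, e2']
  exact Nat.add_comm _ _

end Helpers

lemma orient_out_add_in {V : Type*} [Fintype V] {G : SimpleGraph V} (D : G.Orientation) (v : V) :
    D.outDeg v + D.inDeg v = (G.neighborSet v).ncard := by
  have hdisj : Disjoint {x | D.arc v x} {x | D.arc x v} := by
    rw [Set.disjoint_left]
    intro x h1 h2
    exact D.arc_asymm v x h1 h2
  have hun : {x | D.arc v x} ∪ {x | D.arc x v} = G.neighborSet v := by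
    ext x
    simp only [Set.mem_union, Set.mem_setOf_eq, SimpleGraph.mem_neighborSet]
    constructor
    · rintro (h | h)
      · exact D.adj_of_arc _ _ h
      · exact (D.adj_of_arc _ _ h).symm
    · intro h
      exact D.arc_total v x h
  calc D.outDeg v + D.inDeg v
      = ({x | D.arc v x} ∪ {x | D.arc x v}).ncard :=
        (Set.ncard_union_eq hdisj (Set.toFinite _) (Set.toFinite _)).symm
    _ = _ := by rw [hun]

lemma randic_eq_vertexSum {V : Type*} [Fintype V] {G : SimpleGraph V} (D : G.Orientation)
    (a : ℝ) (ha : 1 ≤ a) :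
    D.randic a = (1/2) * ∑ v : V, ((D.outDeg v : ℝ)^(a+1) + (D.inDeg v : ℝ)^(a+1)) := by
  classical
  have hone : ∀ n : ℕ, ((n:ℝ))^(a+1) = (n:ℝ)^a * n := by
    intro n
    rcases Nat.eq_zero_or_pos n with rfl | h
    · simp [Real.zero_rpow (show a+1 ≠ 0 by linarith), Real.zero_rpow (show a ≠ 0 by linarith)]
    · rw [Real.rpow_add (by exact_mod_cast h : (0:ℝ) < (n:ℝ)), Real.rpow_one]
  have hout : ∀ u : V, D.outDeg u = (Finset.univ.filter fun v => D.arc u v).card := by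
    intro u
    rw [← Set.ncard_coe_finset]
    show Set.ncard _ = Set.ncard _
    congr 1
    ext v; simp
  have hin : ∀ v : V, D.inDeg v = (Finset.univ.filter fun u => D.arc u v).card := by
    intro v
    rw [← Set.ncard_coe_finset]
    show Set.ncard _ = Set.ncard _
    congr 1
    ext u; simp
  unfold SimpleGraph.Orientation.randic
  congr 1
  rw [Finset.sum_add_distrib, Finset.sum_add_distrib]
  congr 1
  · rw [Finset.sum_filter, Fintype.sum_prod_type]
    refine Finset.sum_congr rfl fun u _ => ?_
    simp only
    rw [← Finset.sum_filter, Finset.sum_const, nsmul_eq_mul, ← hout, hone]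
    ring
  · rw [Finset.sum_filter, Fintype.sum_prod_type, Finset.sum_comm]
    refine Finset.sum_congr rfl fun v _ => ?_
    simp only
    rw [← Finset.sum_filter, Finset.sum_const, nsmul_eq_mul, ← hin, hone]
    ring

theorem randic_sub_le_of_delete_shift
    {V : Type*} [Fintype V] [DecidableEq V] (G G' : SimpleGraph V) (n r d : ℕ)
    (hn : Fintype.card V = n) (hn6 : 6 ≤ n) (hr : 2 ≤ r)
    (hcac : G.IsCactus) (hcyc : G.edgeSet.ncard + 1 = n + r)
    (hδ : ∀ v : V, 2 ≤ (G.neighborSet v).ncard)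
    (u₀ u₁ u₂ : V) (h01 : G.Adj u₀ u₁)
    (hd0 : (G.neighborSet u₀).ncard = 2) (hd1 : (G.neighborSet u₁).ncard = 2)
    (hN : G.neighborSet u₀ = {u₁, u₂})
    (hd2 : (G.neighborSet u₂).ncard = d) (hd3 : 3 ≤ d)
    (h12 : ¬ G.Adj u₁ u₂)
    (hG' : ∀ x y, G'.Adj x y ↔
      ((G.Adj x y ∧ x ≠ u₀ ∧ y ≠ u₀) ∨ (x = u₁ ∧ y = u₂) ∨ (x = u₂ ∧ y = u₁)))
    (D : G.Orientation) (D' : G'.Orientation)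
    (hDD' : ∀ x y, x ≠ u₀ → y ≠ u₀ → D.arc x y → D'.arc x y)
    (a : ℝ) (ha : 1 ≤ a) :
    D.randic a - D'.randic a ≤
      (1 / 2) * ((2 : ℝ) ^ (a + 1) - 1 + (d : ℝ) ^ (a + 1) - ((d : ℝ) - 1) ^ (a + 1)) := by
  classical
  have ha1 : a + 1 ≠ 0 := by linarith
  have h02 : G.Adj u₀ u₂ := by
    have h : u₂ ∈ G.neighborSet u₀ := by rw [hN]; right; rfl
    exact h
  have ne01 : u₀ ≠ u₁ := G.ne_of_adj h01
  have ne02 : u₀ ≠ u₂ := G.ne_of_adj h02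
  have ne12 : u₁ ≠ u₂ := by
    intro h
    rw [h, Set.pair_eq_singleton] at hN
    rw [hN, Set.ncard_singleton] at hd0
    norm_num at hd0
  have h21 : ¬ G.Adj u₂ u₁ := fun h => h12 h.symm
  have hmem0 : ∀ x, G.Adj u₀ x → x = u₁ ∨ x = u₂ := by
    intro x hx
    have hx' : x ∈ G.neighborSet u₀ := hx
    rw [hN] at hx'
    simpa using hx'
  have hG'no : ∀ x, ¬ G'.Adj u₀ x := by
    intro x h
    rcases (hG' u₀ x).1 h with ⟨_, h1, _⟩ | ⟨h1, _⟩ | ⟨h1, _⟩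
    · exact h1 rfl
    · exact ne01 h1
    · exact ne02 h1
  have hG'no' : ∀ x, ¬ G'.Adj x u₀ := fun x h => hG'no x h.symm
  have core : ∀ x y, x ≠ u₀ → y ≠ u₀ → ¬(x = u₁ ∧ y = u₂) → ¬(x = u₂ ∧ y = u₁) →
      (D.arc x y ↔ D'.arc x y) := by
    intro x y hx hy hxy hyx
    constructor
    · exact hDD' x y hx hy
    · intro h
      have hadj : G.Adj x y := by
        rcases (hG' x y).1 (D'.adj_of_arc x y h) with ⟨h1, _, _⟩ | h2 | h3
        · exact h1
        · exact absurd h2 hxy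
        · exact absurd h3 hyx
      rcases D.arc_total x y hadj with h' | h'
      · exact h'
      · exact absurd (hDD' y x hy hx h') (D'.arc_asymm x y h)
  have hG'12 : G'.Adj u₁ u₂ := (hG' u₁ u₂).2 (Or.inr (Or.inl ⟨rfl, rfl⟩))
  have E1 : {x | D'.arc u₁ x ∧ x ≠ u₂} = {x | D.arc u₁ x ∧ x ≠ u₀} := by
    ext x
    simp only [Set.mem_setOf_eq]
    constructor
    · rintro ⟨h, hx2⟩
      have hx0 : x ≠ u₀ := by rintro rfl; exact hG'no' u₁ (D'.adj_of_arc _ _ h)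
      refine ⟨(core u₁ x (Ne.symm ne01) hx0 ?_ ?_).2 h, hx0⟩
      · rintro ⟨_, rfl⟩; exact hx2 rfl
      · rintro ⟨h', _⟩; first | exact ne12 h' | exact ne12 h'.symm
    · rintro ⟨h, hx0⟩
      have hx2 : x ≠ u₂ := by rintro rfl; exact h12 (D.adj_of_arc _ _ h)
      refine ⟨(core u₁ x (Ne.symm ne01) hx0 ?_ ?_).1 h, hx2⟩
      · rintro ⟨_, rfl⟩; exact hx2 rfl
      · rintro ⟨h', _⟩; first | exact ne12 h' | exact ne12 h'.symm
  have E2 : {x | D'.arc x u₁ ∧ x ≠ u₂} = {x | D.arc x u₁ ∧ x ≠ u₀} := by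
    ext x
    simp only [Set.mem_setOf_eq]
    constructor
    · rintro ⟨h, hx2⟩
      have hx0 : x ≠ u₀ := by rintro rfl; exact hG'no u₁ (D'.adj_of_arc _ _ h)
      refine ⟨(core x u₁ hx0 (Ne.symm ne01) ?_ ?_).2 h, hx0⟩
      · rintro ⟨_, h'⟩; first | exact ne12 h' | exact ne12 h'.symm
      · rintro ⟨rfl, _⟩; exact hx2 rfl
    · rintro ⟨h, hx0⟩
      have hx2 : x ≠ u₂ := by rintro rfl; exact h21 (D.adj_of_arc _ _ h)
      refine ⟨(core x u₁ hx0 (Ne.symm ne01) ?_ ?_).1 h, hx2⟩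
      · rintro ⟨_, h'⟩; first | exact ne12 h' | exact ne12 h'.symm
      · rintro ⟨rfl, _⟩; exact hx2 rfl
  have E3 : {x | D'.arc u₂ x ∧ x ≠ u₁} = {x | D.arc u₂ x ∧ x ≠ u₀} := by
    ext x
    simp only [Set.mem_setOf_eq]
    constructor
    · rintro ⟨h, hx1⟩
      have hx0 : x ≠ u₀ := by rintro rfl; exact hG'no' u₂ (D'.adj_of_arc _ _ h)
      refine ⟨(core u₂ x (Ne.symm ne02) hx0 ?_ ?_).2 h, hx0⟩
      · rintro ⟨h', _⟩; first | exact ne12 h' | exact ne12 h'.symm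
      · rintro ⟨_, rfl⟩; exact hx1 rfl
    · rintro ⟨h, hx0⟩
      have hx1 : x ≠ u₁ := by rintro rfl; exact h21 (D.adj_of_arc _ _ h)
      refine ⟨(core u₂ x (Ne.symm ne02) hx0 ?_ ?_).1 h, hx1⟩
      · rintro ⟨h', _⟩; first | exact ne12 h' | exact ne12 h'.symm
      · rintro ⟨_, rfl⟩; exact hx1 rfl
  have E4 : {x | D'.arc x u₂ ∧ x ≠ u₁} = {x | D.arc x u₂ ∧ x ≠ u₀} := by
    ext x
    simp only [Set.mem_setOf_eq]
    constructor
    · rintro ⟨h, hx1⟩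
      have hx0 : x ≠ u₀ := by rintro rfl; exact hG'no u₂ (D'.adj_of_arc _ _ h)
      refine ⟨(core x u₂ hx0 (Ne.symm ne02) ?_ ?_).2 h, hx0⟩
      · rintro ⟨rfl, _⟩; exact hx1 rfl
      · rintro ⟨_, h'⟩; first | exact ne12 h' | exact ne12 h'.symm
    · rintro ⟨h, hx0⟩
      have hx1 : x ≠ u₁ := by rintro rfl; exact h12 (D.adj_of_arc _ _ h)
      refine ⟨(core x u₂ hx0 (Ne.symm ne02) ?_ ?_).1 h, hx1⟩
      · rintro ⟨rfl, _⟩; exact hx1 rfl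
      · rintro ⟨_, h'⟩; first | exact ne12 h' | exact ne12 h'.symm
  have hsame : ∀ v, v ≠ u₀ → v ≠ u₁ → v ≠ u₂ →
      D.outDeg v = D'.outDeg v ∧ D.inDeg v = D'.inDeg v := by
    intro v h0 h1 h2
    constructor
    · have hset : {x | D.arc v x} = {x | D'.arc v x} := by
        ext x
        simp only [Set.mem_setOf_eq]
        constructor
        · intro h
          have hx0 : x ≠ u₀ := by
            rintro rfl
            rcases hmem0 v (D.adj_of_arc _ _ h).symm with rfl | rfl
            · exact h1 rfl
            · exact h2 rfl
          exact (core v x h0 hx0 (by rintro ⟨rfl, _⟩; exact h1 rfl)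
            (by rintro ⟨rfl, _⟩; exact h2 rfl)).1 h
        · intro h
          have hx0 : x ≠ u₀ := by rintro rfl; exact hG'no' v (D'.adj_of_arc _ _ h)
          exact (core v x h0 hx0 (by rintro ⟨rfl, _⟩; exact h1 rfl)
            (by rintro ⟨rfl, _⟩; exact h2 rfl)).2 h
      show Set.ncard _ = Set.ncard _
      rw [hset]
    · have hset : {x | D.arc x v} = {x | D'.arc x v} := by
        ext x
        simp only [Set.mem_setOf_eq]
        constructor
        · intro h
          have hx0 : x ≠ u₀ := by
            rintro rfl
            rcases hmem0 v (D.adj_of_arc _ _ h) with rfl | rfl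
            · exact h1 rfl
            · exact h2 rfl
          exact (core x v hx0 h0 (by rintro ⟨_, rfl⟩; exact h2 rfl)
            (by rintro ⟨_, rfl⟩; exact h1 rfl)).1 h
        · intro h
          have hx0 : x ≠ u₀ := by rintro rfl; exact hG'no v (D'.adj_of_arc _ _ h)
          exact (core x v hx0 h0 (by rintro ⟨_, rfl⟩; exact h2 rfl)
            (by rintro ⟨_, rfl⟩; exact h1 rfl)).2 h
      show Set.ncard _ = Set.ncard _
      rw [hset]
  -- named indicators and counts
  obtain ⟨nγ, hnγ⟩ : ∃ k : ℕ, (if D.arc u₁ u₀ then 1 else 0 : ℕ) = k := ⟨_, rfl⟩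
  obtain ⟨nγ', hnγ'⟩ : ∃ k : ℕ, (if D.arc u₀ u₁ then 1 else 0 : ℕ) = k := ⟨_, rfl⟩
  obtain ⟨nα, hnα⟩ : ∃ k : ℕ, (if D.arc u₂ u₀ then 1 else 0 : ℕ) = k := ⟨_, rfl⟩
  obtain ⟨nα', hnα'⟩ : ∃ k : ℕ, (if D.arc u₀ u₂ then 1 else 0 : ℕ) = k := ⟨_, rfl⟩
  obtain ⟨nβ, hnβ⟩ : ∃ k : ℕ, (if D'.arc u₂ u₁ then 1 else 0 : ℕ) = k := ⟨_, rfl⟩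
  obtain ⟨nβ', hnβ'⟩ : ∃ k : ℕ, (if D'.arc u₁ u₂ then 1 else 0 : ℕ) = k := ⟨_, rfl⟩
  obtain ⟨p, hp⟩ : ∃ k : ℕ, {x | D.arc u₁ x ∧ x ≠ u₀}.ncard = k := ⟨_, rfl⟩
  obtain ⟨q, hq⟩ : ∃ k : ℕ, {x | D.arc x u₁ ∧ x ≠ u₀}.ncard = k := ⟨_, rfl⟩
  obtain ⟨s, hs⟩ : ∃ k : ℕ, {x | D.arc u₂ x ∧ x ≠ u₀}.ncard = k := ⟨_, rfl⟩
  obtain ⟨t, ht⟩ : ∃ k : ℕ, {x | D.arc x u₂ ∧ x ≠ u₀}.ncard = k := ⟨_, rfl⟩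
  -- exclusivity
  have hγn : nγ + nγ' = 1 := by
    rw [← hnγ, ← hnγ']
    by_cases h1 : D.arc u₁ u₀
    · rw [if_pos h1, if_neg (D.arc_asymm _ _ h1)]
    · rw [if_neg h1, if_pos ((D.arc_total u₁ u₀ h01.symm).resolve_left h1)]
  have hαn : nα + nα' = 1 := by
    rw [← hnα, ← hnα']
    by_cases h1 : D.arc u₂ u₀
    · rw [if_pos h1, if_neg (D.arc_asymm _ _ h1)]
    · rw [if_neg h1, if_pos ((D.arc_total u₂ u₀ h02.symm).resolve_left h1)]
  have hβn : nβ + nβ' = 1 := by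
    rw [← hnβ, ← hnβ']
    by_cases h1 : D'.arc u₂ u₁
    · rw [if_pos h1, if_neg (D'.arc_asymm _ _ h1)]
    · rw [if_neg h1, if_pos ((D'.arc_total u₂ u₁ hG'12.symm).resolve_left h1)]
  -- split equations
  have hOu1n : D.outDeg u₁ = p + nγ := by
    have h := ncard_ite_split (fun x => D.arc u₁ x) u₀
    rw [hp, hnγ] at h
    exact h
  have hIu1n : D.inDeg u₁ = q + nγ' := by
    have h := ncard_ite_split (fun x => D.arc x u₁) u₀
    rw [hq, hnγ'] at h
    exact h
  have hO'u1n : D'.outDeg u₁ = p + nβ' := by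
    have h := ncard_ite_split (fun x => D'.arc u₁ x) u₂
    rw [E1, hp, hnβ'] at h
    exact h
  have hI'u1n : D'.inDeg u₁ = q + nβ := by
    have h := ncard_ite_split (fun x => D'.arc x u₁) u₂
    rw [E2, hq, hnβ] at h
    exact h
  have hOu2n : D.outDeg u₂ = s + nα := by
    have h := ncard_ite_split (fun x => D.arc u₂ x) u₀
    rw [hs, hnα] at h
    exact h
  have hIu2n : D.inDeg u₂ = t + nα' := by
    have h := ncard_ite_split (fun x => D.arc x u₂) u₀
    rw [ht, hnα'] at h
    exact h
  have hO'u2n : D'.outDeg u₂ = s + nβ := by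
    have h := ncard_ite_split (fun x => D'.arc u₂ x) u₁
    rw [E3, hs, hnβ] at h
    exact h
  have hI'u2n : D'.inDeg u₂ = t + nβ' := by
    have h := ncard_ite_split (fun x => D'.arc x u₂) u₁
    rw [E4, ht, hnβ'] at h
    exact h
  have hOu0n : D.outDeg u₀ = nγ' + nα' := by
    have h := ncard_two_split (fun x => D.arc u₀ x) u₁ u₂ (Ne.symm ne12)
      (fun x hx => hmem0 x (D.adj_of_arc _ _ hx))
    rw [hnγ', hnα'] at h
    exact h
  have hIu0n : D.inDeg u₀ = nγ + nα := by
    have h := ncard_two_split (fun x => D.arc x u₀) u₁ u₂ (Ne.symm ne12)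
      (fun x hx => hmem0 x (D.adj_of_arc _ _ hx).symm)
    rw [hnγ, hnα] at h
    exact h
  have hO'u0n : D'.outDeg u₀ = 0 := by
    have he : {x | D'.arc u₀ x} = (∅ : Set V) := by
      ext x
      simp only [Set.mem_setOf_eq, Set.mem_empty_iff_false, iff_false]
      intro h
      exact hG'no x (D'.adj_of_arc _ _ h)
    show Set.ncard _ = 0
    rw [he, Set.ncard_empty]
  have hI'u0n : D'.inDeg u₀ = 0 := by
    have he : {x | D'.arc x u₀} = (∅ : Set V) := by
      ext x
      simp only [Set.mem_setOf_eq, Set.mem_empty_iff_false, iff_false]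
      intro h
      exact hG'no' x (D'.adj_of_arc _ _ h)
    show Set.ncard _ = 0
    rw [he, Set.ncard_empty]
  -- degree sums
  have hdeg1 : D.outDeg u₁ + D.inDeg u₁ = 2 := by rw [orient_out_add_in, hd1]
  have hdeg2 : D.outDeg u₂ + D.inDeg u₂ = d := by rw [orient_out_add_in, hd2]
  have hpq : p + q = 1 := by
    rw [hOu1n, hIu1n] at hdeg1
    omega
  have hst : s + t + 1 = d := by
    rw [hOu2n, hIu2n] at hdeg2
    omega
  -- real versions
  have cγ : (nγ : ℝ) + (nγ' : ℝ) = 1 := by exact_mod_cast hγn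
  have cα : (nα : ℝ) + (nα' : ℝ) = 1 := by exact_mod_cast hαn
  have cβ : (nβ : ℝ) + (nβ' : ℝ) = 1 := by exact_mod_cast hβn
  have hγ01 : (nγ : ℝ) = 0 ∨ (nγ : ℝ) = 1 := by
    have h : nγ = 0 ∨ nγ = 1 := by omega
    rcases h with h | h <;> simp [h]
  have hα01 : (nα : ℝ) = 0 ∨ (nα : ℝ) = 1 := by
    have h : nα = 0 ∨ nα = 1 := by omega
    rcases h with h | h <;> simp [h]
  have hβ01 : (nβ : ℝ) = 0 ∨ (nβ : ℝ) = 1 := by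
    have h : nβ = 0 ∨ nβ = 1 := by omega
    rcases h with h | h <;> simp [h]
  have rOu0 : ((D.outDeg u₀ : ℕ) : ℝ) = 2 - (nγ : ℝ) - (nα : ℝ) := by
    rw [hOu0n]; push_cast; linarith
  have rIu0 : ((D.inDeg u₀ : ℕ) : ℝ) = (nγ : ℝ) + (nα : ℝ) := by
    rw [hIu0n]; push_cast; ring
  have rO'u0 : ((D'.outDeg u₀ : ℕ) : ℝ) = 0 := by rw [hO'u0n]; norm_num
  have rI'u0 : ((D'.inDeg u₀ : ℕ) : ℝ) = 0 := by rw [hI'u0n]; norm_num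
  have rOu1 : ((D.outDeg u₁ : ℕ) : ℝ) = (p : ℝ) + (nγ : ℝ) := by
    rw [hOu1n]; push_cast; ring
  have rIu1 : ((D.inDeg u₁ : ℕ) : ℝ) = (q : ℝ) + (1 - (nγ : ℝ)) := by
    rw [hIu1n]; push_cast; linarith
  have rO'u1 : ((D'.outDeg u₁ : ℕ) : ℝ) = (p : ℝ) + (1 - (nβ : ℝ)) := by
    rw [hO'u1n]; push_cast; linarith
  have rI'u1 : ((D'.inDeg u₁ : ℕ) : ℝ) = (q : ℝ) + (nβ : ℝ) := by
    rw [hI'u1n]; push_cast; ring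
  have rOu2 : ((D.outDeg u₂ : ℕ) : ℝ) = (s : ℝ) + (nα : ℝ) := by
    rw [hOu2n]; push_cast; ring
  have rIu2 : ((D.inDeg u₂ : ℕ) : ℝ) = (t : ℝ) + (1 - (nα : ℝ)) := by
    rw [hIu2n]; push_cast; linarith
  have rO'u2 : ((D'.outDeg u₂ : ℕ) : ℝ) = (s : ℝ) + (nβ : ℝ) := by
    rw [hO'u2n]; push_cast; ring
  have rI'u2 : ((D'.inDeg u₂ : ℕ) : ℝ) = (t : ℝ) + (1 - (nβ : ℝ)) := by
    rw [hI'u2n]; push_cast; linarith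
  -- main computation
  rw [randic_eq_vertexSum D a ha, randic_eq_vertexSum D' a ha, ← mul_sub,
    ← Finset.sum_sub_distrib]
  have hzero : ∀ v ∈ (Finset.univ : Finset V), v ∉ ({u₀, u₁, u₂} : Finset V) →
      ((D.outDeg v : ℝ)^(a+1) + (D.inDeg v : ℝ)^(a+1)) -
        ((D'.outDeg v : ℝ)^(a+1) + (D'.inDeg v : ℝ)^(a+1)) = 0 := by
    intro v _ hv
    simp only [Finset.mem_insert, Finset.mem_singleton, not_or] at hv
    obtain ⟨e1, e2⟩ := hsame v hv.1 hv.2.1 hv.2.2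
    rw [e1, e2]; ring
  rw [← Finset.sum_subset (Finset.subset_univ ({u₀, u₁, u₂} : Finset V)) hzero]
  have hne1 : u₀ ∉ ({u₁, u₂} : Finset V) := by simp [ne01, ne02]
  have hne2 : u₁ ∉ ({u₂} : Finset V) := by simp [ne12]
  rw [Finset.sum_insert hne1, Finset.sum_insert hne2, Finset.sum_singleton]
  have KEY := key_ineq (a+1) (by linarith) d s t p q hd3 hst hpq
    (nγ : ℝ) (nα : ℝ) (nβ : ℝ) hγ01 hα01 hβ01
  have hz0 : ((0:ℝ))^(a+1) = 0 := Real.zero_rpow ha1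
  rw [rOu0, rIu0, rO'u0, rI'u0, rOu1, rIu1, rO'u1, rI'u1, rOu2, rIu2, rO'u2, rI'u2, hz0]
  linarith [KEY]
end

section
/- Let G be a cactus with n ≥ 6 vertices and r ≥ 2 cycles in which every vertex has degree at least 2. Suppose u₀u₁ is an edge of G with d_G(u₀) = d_G(u₁) = 2, let u₂ be the neighbor of u₀ other than u₁ with d_G(u₂) = d ≥ 3, and suppose u₁u₂ is an edge of G. Let G' = G − u₀ − u₁. Let D be an orientation of G and let D' be an orientation of G' that orients every edge of G' in the same direction as D. Then for every real a ≥ 1, R⁰_{a+1}(D) − R⁰_{a+1}(D') ≤ (1/2)·[2^{a+1} + 2 + d^{a+1} − (d−2)^{a+1}], with equality if and only if d⁻_D(u₂) = d_G(u₂) or d⁺_D(u₂) = d_G(u₂). -/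
/-! ### Auxiliary analytic lemmas -/

namespace RandicAux

open Real Set

lemma combo_eq {x y c σ : ℝ} (hσdef : σ = y + c - x) (hσ : 0 < σ) :
    (y - x) / σ * x + c / σ * (y + c) = x + c ∧
    c / σ * x + (y - x) / σ * (y + c) = y ∧
    (y - x) / σ + c / σ = 1 := by
  subst hσdef
  refine ⟨?_, ?_, ?_⟩ <;> field_simp <;> ring

lemma key_mono {p : ℝ} (hp : 1 ≤ p) {x y c : ℝ} (hx : 0 ≤ x) (hxy : x ≤ y) (hc : 0 ≤ c) :
    (x + c) ^ p - x ^ p ≤ (y + c) ^ p - y ^ p := by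
  rcases hxy.eq_or_lt with rfl | hlt
  · exact le_refl _
  rcases hc.eq_or_lt with rfl | hc
  · simp
  obtain ⟨σ, hσdef, hσ⟩ : ∃ σ : ℝ, σ = y + c - x ∧ 0 < σ := ⟨y + c - x, rfl, by linarith⟩
  obtain ⟨e1, e2, hsum⟩ := combo_eq hσdef hσ
  have hyc : y + c ∈ Ici (0:ℝ) := by simp only [mem_Ici]; linarith
  have hxm : x ∈ Ici (0:ℝ) := hx
  have hcv := convexOn_rpow hp
  have hl : (0:ℝ) ≤ (y - x) / σ := by
    apply div_nonneg (by linarith) hσ.le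
  have hm : (0:ℝ) ≤ c / σ := div_nonneg hc.le hσ.le
  have h1 := hcv.2 hxm hyc hl hm hsum
  have hsum' : c / σ + (y - x) / σ = 1 := by linarith
  have h2 := hcv.2 hxm hyc hm hl hsum'
  simp only [smul_eq_mul] at h1 h2
  rw [e1] at h1
  rw [e2] at h2
  have e3 : (y - x) / σ * x ^ p + c / σ * (y + c) ^ p +
      (c / σ * x ^ p + (y - x) / σ * (y + c) ^ p) = x ^ p + (y + c) ^ p := by
    linear_combination (x ^ p + (y + c) ^ p) * hsum
  linarith

lemma key_strict {p : ℝ} (hp : 1 < p) {x y c : ℝ} (hx : 0 ≤ x) (hxy : x < y) (hc : 0 < c) :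
    (x + c) ^ p - x ^ p < (y + c) ^ p - y ^ p := by
  obtain ⟨σ, hσdef, hσ⟩ : ∃ σ : ℝ, σ = y + c - x ∧ 0 < σ := ⟨y + c - x, rfl, by linarith⟩
  obtain ⟨e1, e2, hsum⟩ := combo_eq hσdef hσ
  have hyc : y + c ∈ Ici (0:ℝ) := by simp only [mem_Ici]; linarith
  have hxm : x ∈ Ici (0:ℝ) := hx
  have hcv := strictConvexOn_rpow hp
  have hl : (0:ℝ) < (y - x) / σ := div_pos (by linarith) hσ
  have hm : (0:ℝ) < c / σ := div_pos hc hσ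
  have hne : x ≠ y + c := by intro h; rw [hσdef, ← h] at hσ; simp at hσ
  have h1 := hcv.2 hxm hyc hne hl hm hsum
  have hsum' : c / σ + (y - x) / σ = 1 := by linarith
  have h2 := hcv.convexOn.2 hxm hyc hm.le hl.le hsum'
  simp only [smul_eq_mul] at h1 h2
  rw [e1] at h1
  rw [e2] at h2
  have e3 : (y - x) / σ * x ^ p + c / σ * (y + c) ^ p +
      (c / σ * x ^ p + (y - x) / σ * (y + c) ^ p) = x ^ p + (y + c) ^ p := by
    linear_combination (x ^ p + (y + c) ^ p) * hsum
  linarith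

lemma psi_hasDeriv {p : ℝ} (hp : 1 ≤ p) (c : ℝ) (x : ℝ) :
    HasDerivAt (fun x : ℝ => (x + c) ^ p - x ^ p)
      (p * (x + c) ^ (p - 1) - p * x ^ (p - 1)) x := by
  have h1 : HasDerivAt (fun x : ℝ => (x + c) ^ p) (p * (x + c) ^ (p - 1)) x := by
    have hg : HasDerivAt (fun y : ℝ => y ^ p) (p * (x + c) ^ (p - 1)) (x + c) :=
      Real.hasDerivAt_rpow_const (Or.inr hp)
    have hf : HasDerivAt (fun x : ℝ => x + c) 1 x := (hasDerivAt_id x).add_const c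
    have hc := hg.comp x hf
    rw [mul_one] at hc
    exact hc
  exact h1.sub (Real.hasDerivAt_rpow_const (Or.inr hp))

lemma psi_conv {p : ℝ} (hp : 2 ≤ p) : ConvexOn ℝ (Ici 0) (fun x : ℝ => (x + 1) ^ p - x ^ p) := by
  have hp1 : (1:ℝ) ≤ p := by linarith
  have hd := psi_hasDeriv hp1 1
  apply MonotoneOn.convexOn_of_deriv (convex_Ici 0)
  · exact fun x _ => (hd x).differentiableAt.continuousAt.continuousWithinAt
  · exact fun x hx => (hd x).differentiableAt.differentiableWithinAt
  · intro x hx y hy hxy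
    rw [(hd x).deriv, (hd y).deriv]
    rw [interior_Ici] at hx hy
    have hkey := key_mono (p := p - 1) (by linarith) (le_of_lt hx) hxy zero_le_one
    have hppos : (0:ℝ) ≤ p := by linarith
    nlinarith [hkey]

lemma psi_superadd {p : ℝ} (hp : 2 ≤ p) {s t : ℝ} (hs : 0 ≤ s) (ht : 0 ≤ t) :
    ((s + 1) ^ p - s ^ p) + ((t + 1) ^ p - t ^ p) ≤ 1 + ((s + t + 1) ^ p - (s + t) ^ p) := by
  have hppos : p ≠ 0 := by positivity
  have hψ0 : ((0:ℝ) + 1) ^ p - (0:ℝ) ^ p = 1 := by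
    rw [Real.zero_rpow hppos, zero_add, Real.one_rpow]; ring
  rcases eq_or_lt_of_le (by positivity : (0:ℝ) ≤ s + t) with h0 | hσ
  · have hs0 : s = 0 := by linarith
    have ht0 : t = 0 := by linarith
    subst hs0; subst ht0
    norm_num [Real.zero_rpow hppos, Real.one_rpow]
  obtain ⟨σ, hσdef, hσpos⟩ : ∃ σ : ℝ, σ = s + t ∧ 0 < σ := ⟨s + t, rfl, hσ⟩
  have hconv := psi_conv hp
  have h0m : (0:ℝ) ∈ Ici (0:ℝ) := by simp
  have hσm : σ ∈ Ici (0:ℝ) := hσpos.le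
  have ha1 : (0:ℝ) ≤ t / σ := div_nonneg ht hσpos.le
  have hb1 : (0:ℝ) ≤ s / σ := div_nonneg hs hσpos.le
  have hne : s + t ≠ 0 := hσ.ne'
  have hab1 : t / σ + s / σ = 1 := by
    rw [← add_div, hσdef, div_eq_one_iff_eq hne]; ring
  have hab2 : s / σ + t / σ = 1 := by linarith
  have h1 := hconv.2 h0m hσm ha1 hb1 hab1
  have h2 := hconv.2 h0m hσm hb1 ha1 hab2
  simp only [smul_eq_mul, mul_zero] at h1 h2
  have e1 : 0 + s / σ * σ = s := by rw [zero_add, div_mul_cancel₀ _ hσpos.ne']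
  have e2 : 0 + t / σ * σ = t := by rw [zero_add, div_mul_cancel₀ _ hσpos.ne']
  rw [e1] at h1
  rw [e2] at h2
  rw [hψ0] at h1 h2
  rw [← hσdef]
  have e3 : t / σ * 1 + s / σ * ((σ + 1) ^ p - σ ^ p) +
      (s / σ * 1 + t / σ * ((σ + 1) ^ p - σ ^ p)) = 1 + ((σ + 1) ^ p - σ ^ p) := by
    linear_combination (1 + ((σ + 1) ^ p - σ ^ p)) * hab1
  linarith

lemma main_eqcase {p : ℝ} (hp : 2 ≤ p) {s t DD : ℝ} (hs : 0 ≤ s) (ht : 0 ≤ t)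
    (hst : s + t + 2 = DD) :
    ((s + 2) ^ p - s ^ p ≤ DD ^ p - (DD - 2) ^ p) ∧
      ((s + 2) ^ p - s ^ p = DD ^ p - (DD - 2) ^ p ↔ t = 0) := by
  have hp1 : (1:ℝ) ≤ p := by linarith
  have hD2 : DD - 2 = s + t := by linarith
  have hDe : DD = s + t + 2 := by linarith
  have hle : (s + 2) ^ p - s ^ p ≤ DD ^ p - (DD - 2) ^ p := by
    rw [hD2, hDe]
    exact key_mono hp1 hs (by linarith) (by norm_num)
  refine ⟨hle, ?_, ?_⟩
  · intro heq
    by_contra ht0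
    have htpos : 0 < t := lt_of_le_of_ne ht (Ne.symm ht0)
    have hstr := key_strict (by linarith : (1:ℝ) < p) hs
      (by linarith : s < s + t) (by norm_num : (0:ℝ) < 2)
    rw [hst] at hstr
    rw [← hD2] at hstr
    linarith
  · intro ht0
    subst ht0
    rw [hD2, hDe]
    norm_num

lemma main_strict {p : ℝ} (hp : 2 ≤ p) {s t DD : ℝ} (hs : 0 ≤ s) (ht : 0 ≤ t)
    (hst : s + t + 2 = DD) (hD : 3 ≤ DD) :
    2 ^ (p + 1) + (((s + 1) ^ p - s ^ p) + ((t + 1) ^ p - t ^ p)) <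
      2 ^ p + 2 + (DD ^ p - (DD - 2) ^ p) := by
  have hp1 : (1:ℝ) ≤ p := by linarith
  have h1 := psi_superadd hp hs ht
  have hst1 : s + t + 1 = DD - 1 := by linarith
  have hst0 : s + t = DD - 2 := by linarith
  rw [hst1, hst0] at h1
  have h2 : (3:ℝ) ^ p - 2 ^ p ≤ DD ^ p - (DD - 1) ^ p := by
    have hk := key_mono hp1 (show (0:ℝ) ≤ 2 by norm_num)
      (show (2:ℝ) ≤ DD - 1 by linarith) zero_le_one
    have e : (2:ℝ) + 1 = 3 := by norm_num
    have e' : DD - 1 + 1 = DD := by ring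
    rw [e, e'] at hk
    linarith
  have h3 : 2 * (2:ℝ) ^ p < 3 ^ p + 1 := by
    have ha : ((3:ℝ)/2) ^ (2:ℝ) ≤ (3/2) ^ p := Real.rpow_le_rpow_of_exponent_le (by norm_num) hp
    have h32 : ((3:ℝ)/2) ^ (2:ℝ) = 9/4 := by
      rw [show (2:ℝ) = ((2:ℕ):ℝ) by norm_num, Real.rpow_natCast]; norm_num
    have hmul : (3:ℝ) ^ p = (3/2) ^ p * 2 ^ p := by
      rw [← Real.mul_rpow (by norm_num) (by norm_num)]; norm_num
    have h2p : (0:ℝ) < 2 ^ p := Real.rpow_pos_of_pos (by norm_num) _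
    nlinarith
  have h4 : (2:ℝ) ^ (p + 1) = 2 ^ p * 2 := by
    rw [Real.rpow_add_one (by norm_num : (2:ℝ) ≠ 0)]
  rw [h4]
  linarith

lemma two_le_two_rpow {p : ℝ} (hp : 2 ≤ p) : (2:ℝ) ≤ 2 ^ p := by
  have h : (2:ℝ) ^ (1:ℝ) ≤ 2 ^ p :=
    Real.rpow_le_rpow_of_exponent_le (by norm_num) (by linarith)
  rwa [Real.rpow_one] at h

lemma vert2_bound {p : ℝ} (hp : 2 ≤ p) {m n : ℕ} (hmn : m + n = 2) :
    (m:ℝ) ^ p + (n:ℝ) ^ p ≤ 2 ^ p := by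
  have hpne : p ≠ 0 := by positivity
  have hm2 : m ≤ 2 := by omega
  interval_cases m
  · have hn : n = 2 := by omega
    subst hn
    norm_num [Real.zero_rpow hpne]
  · have hn : n = 1 := by omega
    subst hn
    norm_num [Real.one_rpow]
    linarith [two_le_two_rpow hp]
  · have hn : n = 0 := by omega
    subst hn
    norm_num [Real.zero_rpow hpne]

end RandicAux

/-! ### Counting helpers -/

namespace RandicCount

open Set
open scoped Classical

lemma ncard_inter_pair {V : Type*} [Fintype V] {A : Set V} {x y : V} (hxy : x ≠ y) :
    (A ∩ {x, y}).ncard = (if x ∈ A then 1 else 0) + (if y ∈ A then 1 else 0) := by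
  by_cases hx : x ∈ A <;> by_cases hy : y ∈ A
  · have he : A ∩ {x, y} = {x, y} := Set.inter_eq_right.mpr (Set.pair_subset hx hy)
    rw [he, Set.ncard_pair hxy, if_pos hx, if_pos hy]
  · have he : A ∩ {x, y} = {x} := by
      ext v
      constructor
      · rintro ⟨hvA, rfl | rfl⟩
        · rfl
        · exact absurd hvA hy
      · rintro rfl; exact ⟨hx, Or.inl rfl⟩
    rw [he, Set.ncard_singleton, if_pos hx, if_neg hy]
  · have he : A ∩ {x, y} = {y} := by
      ext v
      constructor
      · rintro ⟨hvA, rfl | rfl⟩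
        · exact absurd hvA hx
        · rfl
      · rintro rfl; exact ⟨hy, Or.inr rfl⟩
    rw [he, Set.ncard_singleton, if_neg hx, if_pos hy]
  · have he : A ∩ {x, y} = ∅ := by
      ext v
      simp only [Set.mem_inter_iff, Set.mem_insert_iff, Set.mem_singleton_iff,
        Set.mem_empty_iff_false, iff_false, not_and]
      rintro hvA (rfl | rfl)
      · exact hx hvA
      · exact hy hvA
    rw [he, Set.ncard_empty, if_neg hx, if_neg hy]

lemma ncard_of_subset_pair {V : Type*} [Fintype V] {A : Set V} {x y : V} (hxy : x ≠ y)
    (h : A ⊆ {x, y}) :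
    A.ncard = (if x ∈ A then 1 else 0) + (if y ∈ A then 1 else 0) := by
  rw [← ncard_inter_pair hxy, Set.inter_eq_left.mpr h]

lemma ncard_split_pair {V : Type*} [Fintype V] (A : Set V) {x y : V} (hxy : x ≠ y) :
    A.ncard = (A \ {x, y}).ncard + ((if x ∈ A then 1 else 0) + (if y ∈ A then 1 else 0)) := by
  rw [← ncard_inter_pair hxy, add_comm ((A \ ({x,y} : Set V)).ncard),
    Set.ncard_inter_add_ncard_diff_eq_ncard A {x, y} (Set.toFinite A)]

end RandicCount

/-! ### Randić index as a vertex sum -/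

namespace RandicVert

open SimpleGraph SimpleGraph.Orientation

variable {V : Type*} [Fintype V] {G : SimpleGraph V} (D : G.Orientation)

open scoped Classical in
lemma outDeg_eq_card (u : V) :
    D.outDeg u = (Finset.univ.filter (fun v => D.arc u v)).card := by
  rw [SimpleGraph.Orientation.outDeg, ← Set.ncard_coe_finset]
  congr 1
  ext v
  simp

open scoped Classical in
lemma inDeg_eq_card (v : V) :
    D.inDeg v = (Finset.univ.filter (fun u => D.arc u v)).card := by
  rw [SimpleGraph.Orientation.inDeg, ← Set.ncard_coe_finset]
  congr 1
  ext u
  simp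

lemma mul_rpow_self {x : ℝ} (hx : 0 ≤ x) {a : ℝ} (ha : 0 ≤ a) :
    x * x ^ a = x ^ (a + 1) := by
  rcases eq_or_lt_of_le hx with h0 | hpos
  · rw [← h0, Real.zero_rpow (by positivity : a + 1 ≠ 0), zero_mul]
  · rw [Real.rpow_add_one hpos.ne']
    ring

open scoped Classical in
lemma randic_eq_vertexSum (a : ℝ) (ha : 0 ≤ a) :
    D.randic a = (1 / 2) * ∑ v : V,
      ((D.outDeg v : ℝ) ^ (a + 1) + (D.inDeg v : ℝ) ^ (a + 1)) := by
  rw [SimpleGraph.Orientation.randic]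
  congr 1
  rw [Finset.sum_add_distrib, Finset.sum_add_distrib]
  congr 1
  · have h1 : ∀ u : V, ∑ v ∈ Finset.univ.filter (fun v => D.arc u v),
        ((D.outDeg u : ℝ) ^ a) = (D.outDeg u : ℝ) ^ (a + 1) := by
      intro u
      rw [Finset.sum_const, nsmul_eq_mul, ← outDeg_eq_card]
      exact mul_rpow_self (Nat.cast_nonneg _) ha
    calc ∑ p ∈ Finset.univ.filter (fun p : V × V => D.arc p.1 p.2), ((D.outDeg p.1 : ℝ) ^ a)
        = ∑ p : V × V, if D.arc p.1 p.2 then ((D.outDeg p.1 : ℝ) ^ a) else 0 := by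
          rw [Finset.sum_filter]
      _ = ∑ u : V, ∑ v : V, if D.arc u v then ((D.outDeg u : ℝ) ^ a) else 0 := by
          rw [Fintype.sum_prod_type]
      _ = ∑ u : V, (D.outDeg u : ℝ) ^ (a + 1) := by
          refine Finset.sum_congr rfl fun u _ => ?_
          rw [← Finset.sum_filter]
          exact h1 u
  · have h1 : ∀ v : V, ∑ u ∈ Finset.univ.filter (fun u => D.arc u v),
        ((D.inDeg v : ℝ) ^ a) = (D.inDeg v : ℝ) ^ (a + 1) := by
      intro v
      rw [Finset.sum_const, nsmul_eq_mul, ← inDeg_eq_card]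
      exact mul_rpow_self (Nat.cast_nonneg _) ha
    calc ∑ p ∈ Finset.univ.filter (fun p : V × V => D.arc p.1 p.2), ((D.inDeg p.2 : ℝ) ^ a)
        = ∑ p : V × V, if D.arc p.1 p.2 then ((D.inDeg p.2 : ℝ) ^ a) else 0 := by
          rw [Finset.sum_filter]
      _ = ∑ u : V, ∑ v : V, if D.arc u v then ((D.inDeg v : ℝ) ^ a) else 0 := by
          rw [Fintype.sum_prod_type]
      _ = ∑ v : V, ∑ u : V, if D.arc u v then ((D.inDeg v : ℝ) ^ a) else 0 := by
          rw [Finset.sum_comm]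
      _ = ∑ v : V, (D.inDeg v : ℝ) ^ (a + 1) := by
          refine Finset.sum_congr rfl fun v _ => ?_
          rw [← Finset.sum_filter]
          exact h1 v

end RandicVert

theorem randic_sub_le_of_delete_two_vertices
    {V : Type*} [Fintype V] [DecidableEq V] (G G' : SimpleGraph V) (n r d : ℕ)
    (hn : Fintype.card V = n) (hn6 : 6 ≤ n) (hr : 2 ≤ r)
    (hcac : G.IsCactus) (hcyc : G.edgeSet.ncard + 1 = n + r)
    (hδ : ∀ v : V, 2 ≤ (G.neighborSet v).ncard)
    (u₀ u₁ u₂ : V) (h01 : G.Adj u₀ u₁)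
    (hd0 : (G.neighborSet u₀).ncard = 2) (hd1 : (G.neighborSet u₁).ncard = 2)
    (hN : G.neighborSet u₀ = {u₁, u₂})
    (hd2 : (G.neighborSet u₂).ncard = d) (hd3 : 3 ≤ d)
    (h12 : G.Adj u₁ u₂)
    (hG' : ∀ x y, G'.Adj x y ↔
      (G.Adj x y ∧ x ≠ u₀ ∧ x ≠ u₁ ∧ y ≠ u₀ ∧ y ≠ u₁))
    (D : G.Orientation) (D' : G'.Orientation)
    (hDD' : ∀ x y, D'.arc x y → D.arc x y)
    (a : ℝ) (ha : 1 ≤ a) :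
    D.randic a - D'.randic a ≤
      (1 / 2) * ((2 : ℝ) ^ (a + 1) + 2 + (d : ℝ) ^ (a + 1) - ((d : ℝ) - 2) ^ (a + 1)) ∧
    (D.randic a - D'.randic a =
      (1 / 2) * ((2 : ℝ) ^ (a + 1) + 2 + (d : ℝ) ^ (a + 1) - ((d : ℝ) - 2) ^ (a + 1)) ↔
      D.inDeg u₂ = (G.neighborSet u₂).ncard ∨ D.outDeg u₂ = (G.neighborSet u₂).ncard) := by
  classical
  have hane : a + 1 ≠ 0 := by positivity
  have hp2 : (2:ℝ) ≤ a + 1 := by linarith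
  -- basic adjacency and distinctness
  have h02 : G.Adj u₀ u₂ := by
    have h : u₂ ∈ G.neighborSet u₀ := by rw [hN]; exact Set.mem_insert_of_mem _ rfl
    exact h
  have hne01 : u₀ ≠ u₁ := h01.ne
  have hne02 : u₀ ≠ u₂ := h02.ne
  have hne12 : u₁ ≠ u₂ := h12.ne
  have hnb0 : ∀ v, G.Adj u₀ v → v = u₁ ∨ v = u₂ := by
    intro v hv
    have h : v ∈ G.neighborSet u₀ := hv
    rw [hN] at h
    simpa using h
  have hN1 : G.neighborSet u₁ = {u₀, u₂} := by
    have hsub : ({u₀, u₂} : Set V) ⊆ G.neighborSet u₁ := by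
      intro v hv
      rcases hv with rfl | hv
      · exact h01.symm
      · rw [Set.mem_singleton_iff] at hv; subst hv; exact h12
    exact (Set.eq_of_subset_of_ncard_le hsub
      (by rw [hd1, Set.ncard_pair hne02]) (Set.toFinite _)).symm
  have hnb1 : ∀ v, G.Adj u₁ v → v = u₀ ∨ v = u₂ := by
    intro v hv
    have h : v ∈ G.neighborSet u₁ := hv
    rw [hN1] at h
    simpa using h
  have harc : ∀ x y, G.Adj x y → ¬ D.arc x y → D.arc y x := fun x y h hn' =>
    (D.arc_total x y h).resolve_left hn'
  have hD'c : ∀ x y, D'.arc x y ↔ (D.arc x y ∧ x ≠ u₀ ∧ x ≠ u₁ ∧ y ≠ u₀ ∧ y ≠ u₁) := by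
    intro x y
    constructor
    · intro h
      have hadj' := D'.adj_of_arc x y h
      rw [hG'] at hadj'
      exact ⟨hDD' x y h, hadj'.2.1, hadj'.2.2.1, hadj'.2.2.2.1, hadj'.2.2.2.2⟩
    · rintro ⟨hxy, h1, h2, h3, h4⟩
      have hadj' : G'.Adj x y := (hG' x y).mpr ⟨D.adj_of_arc x y hxy, h1, h2, h3, h4⟩
      rcases D'.arc_total x y hadj' with h | h
      · exact h
      · exact absurd hxy (D.arc_asymm y x (hDD' y x h))
  -- D' degrees at u₀, u₁ vanish
  have hout0' : D'.outDeg u₀ = 0 := by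
    have he : {v | D'.arc u₀ v} = ∅ := by
      ext v
      simp only [Set.mem_setOf_eq, Set.mem_empty_iff_false, iff_false]
      intro h; exact ((hD'c u₀ v).mp h).2.1 rfl
    rw [SimpleGraph.Orientation.outDeg, he, Set.ncard_empty]
  have hin0' : D'.inDeg u₀ = 0 := by
    have he : {v | D'.arc v u₀} = ∅ := by
      ext v
      simp only [Set.mem_setOf_eq, Set.mem_empty_iff_false, iff_false]
      intro h; exact ((hD'c v u₀).mp h).2.2.2.1 rfl
    rw [SimpleGraph.Orientation.inDeg, he, Set.ncard_empty]
  have hout1' : D'.outDeg u₁ = 0 := by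
    have he : {v | D'.arc u₁ v} = ∅ := by
      ext v
      simp only [Set.mem_setOf_eq, Set.mem_empty_iff_false, iff_false]
      intro h; exact ((hD'c u₁ v).mp h).2.2.1 rfl
    rw [SimpleGraph.Orientation.outDeg, he, Set.ncard_empty]
  have hin1' : D'.inDeg u₁ = 0 := by
    have he : {v | D'.arc v u₁} = ∅ := by
      ext v
      simp only [Set.mem_setOf_eq, Set.mem_empty_iff_false, iff_false]
      intro h; exact ((hD'c v u₁).mp h).2.2.2.2 rfl
    rw [SimpleGraph.Orientation.inDeg, he, Set.ncard_empty]
  -- degrees outside the triangle are unchanged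
  have houtside : ∀ v, v ≠ u₀ → v ≠ u₁ → v ≠ u₂ →
      D.outDeg v = D'.outDeg v ∧ D.inDeg v = D'.inDeg v := by
    intro v hv0 hv1 hv2
    have hno : ∀ w, G.Adj v w → w ≠ u₀ ∧ w ≠ u₁ := by
      intro w hadj
      constructor
      · rintro rfl
        rcases hnb0 v hadj.symm with h | h
        · exact hv1 h
        · exact hv2 h
      · rintro rfl
        rcases hnb1 v hadj.symm with h | h
        · exact hv0 h
        · exact hv2 h
    constructor
    · have e1 : {w | D.arc v w} = {w | D'.arc v w} := by
        ext w
        simp only [Set.mem_setOf_eq]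
        rw [hD'c]
        constructor
        · intro h
          obtain ⟨hw0, hw1⟩ := hno w (D.adj_of_arc _ _ h)
          exact ⟨h, hv0, hv1, hw0, hw1⟩
        · exact fun h => h.1
      rw [SimpleGraph.Orientation.outDeg, SimpleGraph.Orientation.outDeg, e1]
    · have e2 : {w | D.arc w v} = {w | D'.arc w v} := by
        ext w
        simp only [Set.mem_setOf_eq]
        rw [hD'c]
        constructor
        · intro h
          obtain ⟨hw0, hw1⟩ := hno w (D.adj_of_arc _ _ h).symm
          exact ⟨h, hw0, hw1, hv0, hv1⟩
        · exact fun h => h.1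
      rw [SimpleGraph.Orientation.inDeg, SimpleGraph.Orientation.inDeg, e2]
  -- counting at u₀ and u₁
  have hc0out : D.outDeg u₀ =
      (if D.arc u₀ u₁ then 1 else 0) + (if D.arc u₀ u₂ then 1 else 0) := by
    have hsub : {w | D.arc u₀ w} ⊆ ({u₁, u₂} : Set V) := by
      intro w hw
      rcases hnb0 w (D.adj_of_arc _ _ hw) with h | h <;> simp [h]
    rw [SimpleGraph.Orientation.outDeg, RandicCount.ncard_of_subset_pair hne12 hsub]
    simp only [Set.mem_setOf_eq]
  have hc0in : D.inDeg u₀ =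
      (if D.arc u₁ u₀ then 1 else 0) + (if D.arc u₂ u₀ then 1 else 0) := by
    have hsub : {w | D.arc w u₀} ⊆ ({u₁, u₂} : Set V) := by
      intro w hw
      rcases hnb0 w (D.adj_of_arc _ _ hw).symm with h | h <;> simp [h]
    rw [SimpleGraph.Orientation.inDeg, RandicCount.ncard_of_subset_pair hne12 hsub]
    simp only [Set.mem_setOf_eq]
  have hc1out : D.outDeg u₁ =
      (if D.arc u₁ u₀ then 1 else 0) + (if D.arc u₁ u₂ then 1 else 0) := by
    have hsub : {w | D.arc u₁ w} ⊆ ({u₀, u₂} : Set V) := by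
      intro w hw
      rcases hnb1 w (D.adj_of_arc _ _ hw) with h | h <;> simp [h]
    rw [SimpleGraph.Orientation.outDeg, RandicCount.ncard_of_subset_pair hne02 hsub]
    simp only [Set.mem_setOf_eq]
  have hc1in : D.inDeg u₁ =
      (if D.arc u₀ u₁ then 1 else 0) + (if D.arc u₂ u₁ then 1 else 0) := by
    have hsub : {w | D.arc w u₁} ⊆ ({u₀, u₂} : Set V) := by
      intro w hw
      rcases hnb1 w (D.adj_of_arc _ _ hw).symm with h | h <;> simp [h]
    rw [SimpleGraph.Orientation.inDeg, RandicCount.ncard_of_subset_pair hne02 hsub]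
    simp only [Set.mem_setOf_eq]
  -- splitting the degree at u₂
  have hc2out : D.outDeg u₂ = D'.outDeg u₂ +
      ((if D.arc u₂ u₀ then 1 else 0) + (if D.arc u₂ u₁ then 1 else 0)) := by
    have e : {w | D.arc u₂ w} \ ({u₀, u₁} : Set V) = {w | D'.arc u₂ w} := by
      ext w
      simp only [Set.mem_diff, Set.mem_setOf_eq, Set.mem_insert_iff,
        Set.mem_singleton_iff, not_or]
      rw [hD'c]
      constructor
      · rintro ⟨h, h0, h1⟩
        exact ⟨h, hne02.symm, hne12.symm, h0, h1⟩
      · rintro ⟨h, _, _, h3, h4⟩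
        exact ⟨h, h3, h4⟩
    have hs := RandicCount.ncard_split_pair {w | D.arc u₂ w} hne01
    rw [e] at hs
    simpa only [SimpleGraph.Orientation.outDeg, Set.mem_setOf_eq] using hs
  have hc2in : D.inDeg u₂ = D'.inDeg u₂ +
      ((if D.arc u₀ u₂ then 1 else 0) + (if D.arc u₁ u₂ then 1 else 0)) := by
    have e : {w | D.arc w u₂} \ ({u₀, u₁} : Set V) = {w | D'.arc w u₂} := by
      ext w
      simp only [Set.mem_diff, Set.mem_setOf_eq, Set.mem_insert_iff,
        Set.mem_singleton_iff, not_or]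
      rw [hD'c]
      constructor
      · rintro ⟨h, h0, h1⟩
        exact ⟨h, h0, h1, hne02.symm, hne12.symm⟩
      · rintro ⟨h, h1, h2, _, _⟩
        exact ⟨h, h1, h2⟩
    have hs := RandicCount.ncard_split_pair {w | D.arc w u₂} hne01
    rw [e] at hs
    simpa only [SimpleGraph.Orientation.inDeg, Set.mem_setOf_eq] using hs
  -- s + t + 2 = d
  have hstd : D'.outDeg u₂ + D'.inDeg u₂ + 2 = d := by
    have hdisj : Disjoint {w | D'.arc u₂ w} {w | D'.arc w u₂} := by
      rw [Set.disjoint_left]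
      intro w h1 h2
      exact D'.arc_asymm _ _ h1 h2
    have hUI : {w | D'.arc u₂ w} ∪ {w | D'.arc w u₂} = G'.neighborSet u₂ := by
      ext w
      simp only [Set.mem_union, Set.mem_setOf_eq, SimpleGraph.mem_neighborSet]
      constructor
      · rintro (h | h)
        · exact D'.adj_of_arc _ _ h
        · exact (D'.adj_of_arc _ _ h).symm
      · exact fun h => D'.arc_total _ _ h
    have hsum := Set.ncard_union_eq hdisj (Set.toFinite _) (Set.toFinite _)
    rw [hUI] at hsum
    have hNN : G'.neighborSet u₂ ∪ ({u₀, u₁} : Set V) = G.neighborSet u₂ := by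
      ext w
      simp only [Set.mem_union, SimpleGraph.mem_neighborSet, Set.mem_insert_iff,
        Set.mem_singleton_iff]
      constructor
      · rintro (h | rfl | rfl)
        · exact ((hG' u₂ w).mp h).1
        · exact h02.symm
        · exact h12.symm
      · intro h
        by_cases hw0 : w = u₀
        · right; left; exact hw0
        by_cases hw1 : w = u₁
        · right; right; exact hw1
        · left; exact (hG' u₂ w).mpr ⟨h, hne02.symm, hne12.symm, hw0, hw1⟩
    have hdisj2 : Disjoint (G'.neighborSet u₂) ({u₀, u₁} : Set V) := by
      rw [Set.disjoint_right]
      intro w hw hmem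
      simp only [Set.mem_insert_iff, Set.mem_singleton_iff] at hw
      have hh := (hG' u₂ w).mp hmem
      rcases hw with rfl | rfl
      · exact hh.2.2.2.1 rfl
      · exact hh.2.2.2.2 rfl
    have h2 := Set.ncard_union_eq hdisj2 (Set.toFinite _) (Set.toFinite _)
    rw [hNN, hd2, Set.ncard_pair hne01] at h2
    have ho : D'.outDeg u₂ = ({w | D'.arc u₂ w} : Set V).ncard := rfl
    have hi : D'.inDeg u₂ = ({w | D'.arc w u₂} : Set V).ncard := rfl
    omega
  have hS : (0:ℝ) ≤ (D'.outDeg u₂ : ℝ) := Nat.cast_nonneg _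
  have hT : (0:ℝ) ≤ (D'.inDeg u₂ : ℝ) := Nat.cast_nonneg _
  have hST : (D'.outDeg u₂ : ℝ) + (D'.inDeg u₂ : ℝ) + 2 = (d : ℝ) := by
    exact_mod_cast congrArg (Nat.cast : ℕ → ℝ) hstd
  have hdd : (3:ℝ) ≤ (d : ℝ) := by exact_mod_cast hd3
  -- the difference as a three-vertex sum
  have hRdiff : D.randic a - D'.randic a = (1/2) * (
      (((D.outDeg u₀ : ℝ) ^ (a+1) + (D.inDeg u₀ : ℝ) ^ (a+1)) -
        ((D'.outDeg u₀ : ℝ) ^ (a+1) + (D'.inDeg u₀ : ℝ) ^ (a+1)))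
    + (((D.outDeg u₁ : ℝ) ^ (a+1) + (D.inDeg u₁ : ℝ) ^ (a+1)) -
        ((D'.outDeg u₁ : ℝ) ^ (a+1) + (D'.inDeg u₁ : ℝ) ^ (a+1)))
    + (((D.outDeg u₂ : ℝ) ^ (a+1) + (D.inDeg u₂ : ℝ) ^ (a+1)) -
        ((D'.outDeg u₂ : ℝ) ^ (a+1) + (D'.inDeg u₂ : ℝ) ^ (a+1)))) := by
    rw [RandicVert.randic_eq_vertexSum D a (by linarith),
      RandicVert.randic_eq_vertexSum D' a (by linarith), ← mul_sub,
      ← Finset.sum_sub_distrib]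
    congr 1
    have hz : ∀ v ∈ (Finset.univ : Finset V), v ∉ ({u₀, u₁, u₂} : Finset V) →
        (((D.outDeg v : ℝ) ^ (a+1) + (D.inDeg v : ℝ) ^ (a+1)) -
          ((D'.outDeg v : ℝ) ^ (a+1) + (D'.inDeg v : ℝ) ^ (a+1))) = 0 := by
      intro v _ hv
      simp only [Finset.mem_insert, Finset.mem_singleton, not_or] at hv
      obtain ⟨hout, hin⟩ := houtside v hv.1 hv.2.1 hv.2.2
      rw [hout, hin]
      ring
    rw [← Finset.sum_subset (Finset.subset_univ ({u₀, u₁, u₂} : Finset V)) hz]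
    rw [Finset.sum_insert (by simp [hne01, hne02]),
      Finset.sum_insert (by simp [hne12]), Finset.sum_singleton]
    ring
  rw [hd2]
  have hbig := RandicAux.main_eqcase hp2 hS hT hST
  have hbigT := RandicAux.main_eqcase hp2 hT hS
    (by linarith : (D'.inDeg u₂ : ℝ) + (D'.outDeg u₂ : ℝ) + 2 = (d:ℝ))
  -- Case split on the two edges at u₂
  by_cases hb02 : D.arc u₀ u₂ <;> by_cases hb12 : D.arc u₁ u₂
  · -- both point into u₂ : inDeg u₂ = t + 2
    have hn20 : ¬ D.arc u₂ u₀ := D.arc_asymm _ _ hb02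
    have hn21 : ¬ D.arc u₂ u₁ := D.arc_asymm _ _ hb12
    have hc2out' : D.outDeg u₂ = D'.outDeg u₂ := by
      simp [hc2out, if_neg hn20, if_neg hn21]
    have hc2in' : D.inDeg u₂ = D'.inDeg u₂ + 2 := by
      simp [hc2in, if_pos hb02, if_pos hb12]
    have htri : ((D.outDeg u₀ : ℝ) ^ (a+1) + (D.inDeg u₀ : ℝ) ^ (a+1)) +
        ((D.outDeg u₁ : ℝ) ^ (a+1) + (D.inDeg u₁ : ℝ) ^ (a+1)) = 2 ^ (a+1) + 2 := by
      rcases D.arc_total u₀ u₁ h01 with hb01 | hb01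
      · have hn10 : ¬ D.arc u₁ u₀ := D.arc_asymm _ _ hb01
        simp only [hc0out, hc0in, hc1out, hc1in, if_pos hb01, if_pos hb02,
          if_neg hn10, if_neg hn20, if_pos hb12, if_neg hn21]
        norm_num [Real.zero_rpow hane, Real.one_rpow]
      · have hn01' : ¬ D.arc u₀ u₁ := D.arc_asymm _ _ hb01
        simp only [hc0out, hc0in, hc1out, hc1in, if_neg hn01', if_pos hb02,
          if_pos hb01, if_neg hn20, if_pos hb12, if_neg hn21]
        norm_num [Real.zero_rpow hane, Real.one_rpow]
        ring
    have hE : D.randic a - D'.randic a =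
        (1/2) * ((2 ^ (a+1) + 2) +
          (((D'.inDeg u₂ : ℝ) + 2) ^ (a+1) - (D'.inDeg u₂ : ℝ) ^ (a+1))) := by
      rw [hRdiff, hout0', hin0', hout1', hin1', hc2out', hc2in']
      push_cast
      rw [Real.zero_rpow hane]
      linarith [htri]
    constructor
    · rw [hE]
      linarith [hbigT.1]
    · rw [hE]
      constructor
      · intro h
        have heq : ((D'.inDeg u₂ : ℝ) + 2) ^ (a+1) - (D'.inDeg u₂ : ℝ) ^ (a+1) =
            (d:ℝ) ^ (a+1) - ((d:ℝ) - 2) ^ (a+1) := by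
          linarith
        have hS0 : (D'.outDeg u₂ : ℝ) = 0 := hbigT.2.mp heq
        have hS0' : D'.outDeg u₂ = 0 := by exact_mod_cast hS0
        left
        omega
      · rintro (h | h)
        · have hS0' : D'.outDeg u₂ = 0 := by omega
          have hS0 : (D'.outDeg u₂ : ℝ) = 0 := by rw [hS0']; norm_num
          have heq := hbigT.2.mpr hS0
          linarith
        · exfalso
          omega
  · -- u₀ → u₂, u₂ → u₁ : mixed
    have hn20 : ¬ D.arc u₂ u₀ := D.arc_asymm _ _ hb02
    have hb21 : D.arc u₂ u₁ := harc u₁ u₂ h12 hb12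
    have hc2out' : D.outDeg u₂ = D'.outDeg u₂ + 1 := by
      simp [hc2out, if_neg hn20, if_pos hb21]
    have hc2in' : D.inDeg u₂ = D'.inDeg u₂ + 1 := by
      simp [hc2in, if_pos hb02, if_neg hb12]
    have hdeg0 : D.outDeg u₀ + D.inDeg u₀ = 2 := by
      rcases D.arc_total u₀ u₁ h01 with hb01 | hb01
      · simp [hc0out, hc0in, if_pos hb02, if_neg hn20, if_pos hb01,
          if_neg (D.arc_asymm _ _ hb01)]
      · simp [hc0out, hc0in, if_pos hb02, if_neg hn20, if_pos hb01,
          if_neg (D.arc_asymm _ _ hb01)]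
    have hdeg1 : D.outDeg u₁ + D.inDeg u₁ = 2 := by
      rcases D.arc_total u₀ u₁ h01 with hb01 | hb01
      · simp [hc1out, hc1in, if_neg hb12, if_pos hb21, if_pos hb01,
          if_neg (D.arc_asymm _ _ hb01)]
      · simp [hc1out, hc1in, if_neg hb12, if_pos hb21, if_pos hb01,
          if_neg (D.arc_asymm _ _ hb01)]
    have htri : ((D.outDeg u₀ : ℝ) ^ (a+1) + (D.inDeg u₀ : ℝ) ^ (a+1)) +
        ((D.outDeg u₁ : ℝ) ^ (a+1) + (D.inDeg u₁ : ℝ) ^ (a+1)) ≤ 2 ^ ((a+1) + 1) := by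
      have hv1 := RandicAux.vert2_bound hp2 hdeg0
      have hv2 := RandicAux.vert2_bound hp2 hdeg1
      have h4 : (2:ℝ) ^ ((a+1) + 1) = 2 ^ (a+1) * 2 := by
        rw [Real.rpow_add_one (by norm_num : (2:ℝ) ≠ 0)]
      rw [h4]
      linarith
    have hE : D.randic a - D'.randic a = (1/2) * (
        (((D.outDeg u₀ : ℝ) ^ (a+1) + (D.inDeg u₀ : ℝ) ^ (a+1)) +
         ((D.outDeg u₁ : ℝ) ^ (a+1) + (D.inDeg u₁ : ℝ) ^ (a+1)))
        + ((((D'.outDeg u₂ : ℝ) + 1) ^ (a+1) - (D'.outDeg u₂ : ℝ) ^ (a+1)) +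
           (((D'.inDeg u₂ : ℝ) + 1) ^ (a+1) - (D'.inDeg u₂ : ℝ) ^ (a+1)))) := by
      rw [hRdiff, hout0', hin0', hout1', hin1', hc2out', hc2in']
      push_cast
      rw [Real.zero_rpow hane]
      ring
    have hstrict := RandicAux.main_strict hp2 hS hT hST hdd
    constructor
    · rw [hE]
      linarith
    · rw [hE]
      constructor
      · intro h
        exfalso
        linarith
      · rintro (h | h) <;> exfalso <;> omega
  · -- u₂ → u₀, u₁ → u₂ : mixed (symmetric)
    have hb20 : D.arc u₂ u₀ := harc u₀ u₂ h02 hb02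
    have hn21 : ¬ D.arc u₂ u₁ := D.arc_asymm _ _ hb12
    have hc2out' : D.outDeg u₂ = D'.outDeg u₂ + 1 := by
      simp [hc2out, if_pos hb20, if_neg hn21]
    have hc2in' : D.inDeg u₂ = D'.inDeg u₂ + 1 := by
      simp [hc2in, if_neg hb02, if_pos hb12]
    have hdeg0 : D.outDeg u₀ + D.inDeg u₀ = 2 := by
      rcases D.arc_total u₀ u₁ h01 with hb01 | hb01
      · simp [hc0out, hc0in, if_neg hb02, if_pos hb20, if_pos hb01,
          if_neg (D.arc_asymm _ _ hb01)]
      · simp [hc0out, hc0in, if_neg hb02, if_pos hb20, if_pos hb01,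
          if_neg (D.arc_asymm _ _ hb01)]
    have hdeg1 : D.outDeg u₁ + D.inDeg u₁ = 2 := by
      rcases D.arc_total u₀ u₁ h01 with hb01 | hb01
      · simp [hc1out, hc1in, if_pos hb12, if_neg hn21, if_pos hb01,
          if_neg (D.arc_asymm _ _ hb01)]
      · simp [hc1out, hc1in, if_pos hb12, if_neg hn21, if_pos hb01,
          if_neg (D.arc_asymm _ _ hb01)]
    have htri : ((D.outDeg u₀ : ℝ) ^ (a+1) + (D.inDeg u₀ : ℝ) ^ (a+1)) +
        ((D.outDeg u₁ : ℝ) ^ (a+1) + (D.inDeg u₁ : ℝ) ^ (a+1)) ≤ 2 ^ ((a+1) + 1) := by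
      have hv1 := RandicAux.vert2_bound hp2 hdeg0
      have hv2 := RandicAux.vert2_bound hp2 hdeg1
      have h4 : (2:ℝ) ^ ((a+1) + 1) = 2 ^ (a+1) * 2 := by
        rw [Real.rpow_add_one (by norm_num : (2:ℝ) ≠ 0)]
      rw [h4]
      linarith
    have hE : D.randic a - D'.randic a = (1/2) * (
        (((D.outDeg u₀ : ℝ) ^ (a+1) + (D.inDeg u₀ : ℝ) ^ (a+1)) +
         ((D.outDeg u₁ : ℝ) ^ (a+1) + (D.inDeg u₁ : ℝ) ^ (a+1)))
        + ((((D'.outDeg u₂ : ℝ) + 1) ^ (a+1) - (D'.outDeg u₂ : ℝ) ^ (a+1)) +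
           (((D'.inDeg u₂ : ℝ) + 1) ^ (a+1) - (D'.inDeg u₂ : ℝ) ^ (a+1)))) := by
      rw [hRdiff, hout0', hin0', hout1', hin1', hc2out', hc2in']
      push_cast
      rw [Real.zero_rpow hane]
      ring
    have hstrict := RandicAux.main_strict hp2 hS hT hST hdd
    constructor
    · rw [hE]
      linarith
    · rw [hE]
      constructor
      · intro h
        exfalso
        linarith
      · rintro (h | h) <;> exfalso <;> omega
  · -- both point out of u₂ : outDeg u₂ = s + 2
    have hb20 : D.arc u₂ u₀ := harc u₀ u₂ h02 hb02
    have hb21 : D.arc u₂ u₁ := harc u₁ u₂ h12 hb12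
    have hc2out' : D.outDeg u₂ = D'.outDeg u₂ + 2 := by
      simp [hc2out, if_pos hb20, if_pos hb21]
    have hc2in' : D.inDeg u₂ = D'.inDeg u₂ := by
      simp [hc2in, if_neg hb02, if_neg hb12]
    have htri : ((D.outDeg u₀ : ℝ) ^ (a+1) + (D.inDeg u₀ : ℝ) ^ (a+1)) +
        ((D.outDeg u₁ : ℝ) ^ (a+1) + (D.inDeg u₁ : ℝ) ^ (a+1)) = 2 ^ (a+1) + 2 := by
      rcases D.arc_total u₀ u₁ h01 with hb01 | hb01
      · have hn10 : ¬ D.arc u₁ u₀ := D.arc_asymm _ _ hb01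
        simp only [hc0out, hc0in, hc1out, hc1in, if_pos hb01, if_neg hb02,
          if_neg hn10, if_pos hb20, if_neg hb12, if_pos hb21]
        norm_num [Real.zero_rpow hane, Real.one_rpow]
        ring
      · have hn01' : ¬ D.arc u₀ u₁ := D.arc_asymm _ _ hb01
        simp only [hc0out, hc0in, hc1out, hc1in, if_neg hn01', if_neg hb02,
          if_pos hb01, if_pos hb20, if_neg hb12, if_pos hb21]
        norm_num [Real.zero_rpow hane, Real.one_rpow]
    have hE : D.randic a - D'.randic a =
        (1/2) * ((2 ^ (a+1) + 2) +
          (((D'.outDeg u₂ : ℝ) + 2) ^ (a+1) - (D'.outDeg u₂ : ℝ) ^ (a+1))) := by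
      rw [hRdiff, hout0', hin0', hout1', hin1', hc2out', hc2in']
      push_cast
      rw [Real.zero_rpow hane]
      linarith [htri]
    constructor
    · rw [hE]
      linarith [hbig.1]
    · rw [hE]
      constructor
      · intro h
        have heq : ((D'.outDeg u₂ : ℝ) + 2) ^ (a+1) - (D'.outDeg u₂ : ℝ) ^ (a+1) =
            (d:ℝ) ^ (a+1) - ((d:ℝ) - 2) ^ (a+1) := by
          linarith
        have hT0 : (D'.inDeg u₂ : ℝ) = 0 := hbig.2.mp heq
        have hT0' : D'.inDeg u₂ = 0 := by exact_mod_cast hT0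
        right
        omega
      · rintro (h | h)
        · exfalso
          omega
        · have hT0' : D'.inDeg u₂ = 0 := by omega
          have hT0 : (D'.inDeg u₂ : ℝ) = 0 := by rw [hT0']; norm_num
          have heq := hbig.2.mpr hT0
          linarith
end

section
/- Let G be a tree with n ≥ 2 vertices and let a ≥ 1 be a real number. Then R⁰_{a+1}(G) ≤ n − 1 + (n−1)^{1+a}, with equality if and only if G is the star K_{1,n−1}. -/
open Finset Real

/-- `G` is a star: there is a center adjacent to exactly the other vertices, which are
pairwise non-adjacent. -/
def SimpleGraph.IsStar {V : Type*} (G : SimpleGraph V) : Prop :=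
  ∃ c : V, ∀ x y : V, G.Adj x y ↔ ((x = c ∧ y ≠ c) ∨ (y = c ∧ x ≠ c))

lemma aux_le {a m d : ℝ} (ha : 1 ≤ a) (hm : 1 ≤ m) (h1 : 1 ≤ d) (h2 : d ≤ m) :
    d ^ (a + 1) ≤ 1 + (d - 1) * ((m ^ (a + 1) - 1) / (m - 1)) := by
  rcases eq_or_lt_of_le hm with hm1 | hm1
  · have hd : d = 1 := le_antisymm (hm1 ▸ h2) h1
    simp [hd, Real.one_rpow]
  · have hne : m - 1 ≠ 0 := by linarith
    have ht : (0:ℝ) ≤ (m - d) / (m - 1) := div_nonneg (by linarith) (by linarith)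
    have hs : (0:ℝ) ≤ (d - 1) / (m - 1) := div_nonneg (by linarith) (by linarith)
    have hts : (m - d) / (m - 1) + (d - 1) / (m - 1) = 1 := by field_simp; ring
    have hc := (convexOn_rpow (p := a + 1) (by linarith)).2
      (Set.mem_Ici.2 (by norm_num : (0:ℝ) ≤ 1)) (Set.mem_Ici.2 (by linarith : (0:ℝ) ≤ m))
      ht hs hts
    simp only [smul_eq_mul] at hc
    have hx : (m - d) / (m - 1) * 1 + (d - 1) / (m - 1) * m = d := by
      field_simp; ring
    rw [hx] at hc
    calc d ^ (a+1) ≤ (m - d) / (m - 1) * (1:ℝ) ^ (a+1) + (d - 1) / (m - 1) * m ^ (a+1) := hc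
    _ = 1 + (d - 1) * ((m ^ (a + 1) - 1) / (m - 1)) := by
        rw [Real.one_rpow]; field_simp; ring

lemma aux_lt {a m d : ℝ} (ha : 1 ≤ a) (h1 : 1 < d) (h2 : d < m) :
    d ^ (a + 1) < 1 + (d - 1) * ((m ^ (a + 1) - 1) / (m - 1)) := by
  have hm1 : 1 < m := h1.trans h2
  have hne : m - 1 ≠ 0 := by linarith
  have ht : (0:ℝ) < (m - d) / (m - 1) := div_pos (by linarith) (by linarith)
  have hs : (0:ℝ) < (d - 1) / (m - 1) := div_pos (by linarith) (by linarith)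
  have hts : (m - d) / (m - 1) + (d - 1) / (m - 1) = 1 := by field_simp; ring
  have hc := (strictConvexOn_rpow (p := a + 1) (by linarith)).2
    (Set.mem_Ici.2 (by norm_num : (0:ℝ) ≤ 1)) (Set.mem_Ici.2 (by linarith : (0:ℝ) ≤ m))
    (by linarith : (1:ℝ) ≠ m) ht hs hts
  simp only [smul_eq_mul] at hc
  have hx : (m - d) / (m - 1) * 1 + (d - 1) / (m - 1) * m = d := by
    field_simp; ring
  rw [hx] at hc
  calc d ^ (a+1) < (m - d) / (m - 1) * (1:ℝ) ^ (a+1) + (d - 1) / (m - 1) * m ^ (a+1) := hc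
  _ = 1 + (d - 1) * ((m ^ (a + 1) - 1) / (m - 1)) := by
      rw [Real.one_rpow]; field_simp; ring

/-- a tree on `n ≥ 2` vertices satisfies
`R⁰_{a+1}(G) ≤ n - 1 + (n-1)^(1+a)`, with equality iff `G` is the star `K_{1,n-1}`. -/
theorem tree_randic_le {V : Type*} [Fintype V] (G : SimpleGraph V) (n : ℕ)
    (hn : Fintype.card V = n) (hn2 : 2 ≤ n) (htree : G.IsTree) (a : ℝ) (ha : 1 ≤ a) :
    G.randic a ≤ (n : ℝ) - 1 + ((n : ℝ) - 1) ^ (1 + a) ∧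
    (G.randic a = (n : ℝ) - 1 + ((n : ℝ) - 1) ^ (1 + a) ↔ G.IsStar) := by
  classical
  set m : ℝ := (n : ℝ) - 1 with hm_def
  have hm1 : (1:ℝ) ≤ m := by
    have : (2:ℝ) ≤ (n:ℝ) := by exact_mod_cast hn2
    simp only [hm_def]; linarith
  set C : ℝ := (m ^ (a + 1) - 1) / (m - 1) with hC_def
  -- degrees
  have hdeg : ∀ v : V, ((G.neighborSet v).ncard : ℝ) = (G.degree v : ℝ) := by
    intro v
    rw [Set.ncard_eq_toFinset_card', ← SimpleGraph.neighborFinset_def]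
    rfl
  have hrandic : G.randic a = ∑ v : V, ((G.degree v : ℝ)) ^ (a + 1) := by
    unfold SimpleGraph.randic
    exact Finset.sum_congr rfl fun v _ => by rw [hdeg v]
  -- every vertex has degree ≥ 1
  have hd1 : ∀ v : V, 1 ≤ G.degree v := by
    intro v
    obtain ⟨u, hu⟩ := Fintype.exists_ne_of_one_lt_card (by omega) v
    obtain ⟨w⟩ := htree.isConnected.preconnected v u
    cases w with
    | nil => exact absurd rfl hu.symm
    | cons h p => exact (G.degree_pos_iff_exists_adj v).2 ⟨_, h⟩
  have hdm : ∀ v : V, G.degree v ≤ n - 1 := by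
    intro v
    have := G.degree_lt_card_verts v
    omega
  have hdmr : ∀ v : V, ((G.degree v : ℝ)) ≤ m := by
    intro v
    have h1 := hdm v
    have : ((G.degree v : ℝ)) ≤ ((n - 1 : ℕ) : ℝ) := by exact_mod_cast h1
    rwa [Nat.cast_sub (by omega), Nat.cast_one] at this
  have hd1r : ∀ v : V, (1:ℝ) ≤ ((G.degree v : ℝ)) := fun v => by exact_mod_cast hd1 v
  -- degree sum
  have hDsum : ∑ v : V, G.degree v = 2 * (n - 1) := by
    rw [G.sum_degrees_eq_twice_card_edges]
    have := htree.card_edgeFinset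
    omega
  have hDsumR : ∑ v : V, ((G.degree v : ℝ)) = 2 * m := by
    have h : ((∑ v : V, G.degree v : ℕ) : ℝ) = 2 * m := by
      rw [hDsum, Nat.cast_mul, Nat.cast_sub (by omega : 1 ≤ n)]
      push_cast
      simp [hm_def]
    rw [Nat.cast_sum] at h
    exact h
  -- key algebraic identity
  have hmC : (m - 1) * C = m ^ (a + 1) - 1 := by
    rcases eq_or_lt_of_le hm1 with h | h
    · rw [← h]; simp [Real.one_rpow]
    · rw [hC_def, mul_div_cancel₀]
      linarith
  -- sum of the linear upper bounds
  have hsumL : ∑ v : V, (1 + (((G.degree v : ℝ)) - 1) * C) = (n:ℝ) - 1 + m ^ (a + 1) := by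
    rw [Finset.sum_add_distrib, Finset.sum_const, ← Finset.sum_mul, Finset.sum_sub_distrib,
      Finset.sum_const, hDsumR, Finset.card_univ, hn]
    have h2 : (2 * m - (n:ℝ) * 1) = m - 1 := by simp [hm_def]; ring
    rw [nsmul_eq_mul, h2, hmC]
    ring
  -- pointwise bound
  have hpt : ∀ v : V, ((G.degree v : ℝ)) ^ (a+1) ≤ 1 + (((G.degree v : ℝ)) - 1) * C :=
    fun v => aux_le ha hm1 (hd1r v) (hdmr v)
  have hle : G.randic a ≤ (n:ℝ) - 1 + m ^ (a + 1) := by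
    rw [hrandic, ← hsumL]
    exact Finset.sum_le_sum fun v _ => hpt v
  have hcomm : m ^ (1 + a) = m ^ (a + 1) := by rw [add_comm]
  refine ⟨by rw [hcomm]; exact hle, ?_, ?_⟩
  · -- equality → star
    intro heq
    rw [hcomm] at heq
    rw [hrandic] at heq
    rw [← hsumL] at heq
    have hall := (Finset.sum_eq_sum_iff_of_le (fun v _ => hpt v)).1 heq
    -- each degree is 1 or n - 1
    have hdich : ∀ v : V, G.degree v = 1 ∨ G.degree v = n - 1 := by
      intro v
      by_contra hcon
      push_neg at hcon
      have h1 : (1:ℝ) < (G.degree v : ℝ) := by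
        rcases lt_or_eq_of_le (hd1r v) with h | h
        · exact h
        · exact absurd (by exact_mod_cast h.symm) hcon.1
      have h2 : ((G.degree v : ℝ)) < m := by
        rcases lt_or_eq_of_le (hdmr v) with h | h
        · exact h
        · exfalso
          apply hcon.2
          have : ((G.degree v : ℝ)) = ((n - 1 : ℕ) : ℝ) := by
            rw [h, hm_def, Nat.cast_sub (by omega), Nat.cast_one]
          exact_mod_cast this
      exact absurd (hall v (Finset.mem_univ v)) (ne_of_lt (aux_lt ha h1 h2))
    haveI : Nonempty V := Fintype.card_pos_iff.mp (by omega)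
    -- there is a vertex of degree n - 1
    have hex : ∃ c : V, G.degree c = n - 1 := by
      by_contra hno
      push_neg at hno
      have hall1 : ∀ v : V, G.degree v = 1 := fun v => (hdich v).resolve_right (hno v)
      have hs1 : ∑ v : V, G.degree v = n := by
        simp [hall1, Finset.card_univ, hn]
      have hn2' : n = 2 := by omega
      exact hno (Classical.arbitrary V) (by rw [hall1, hn2'])
    obtain ⟨c, hc⟩ := hex
    -- all other vertices have degree 1
    have hrest : ∀ v : V, v ≠ c → G.degree v = 1 := by
      have h1 : G.degree c + ∑ v ∈ Finset.univ.erase c, G.degree v = 2 * (n - 1) := by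
        exact (Finset.add_sum_erase _ _ (Finset.mem_univ c)).trans hDsum
      have h2 : ∑ v ∈ Finset.univ.erase c, G.degree v = n - 1 := by omega
      have h3 : ∑ _v ∈ Finset.univ.erase c, 1 = n - 1 := by
        simp [Finset.card_erase_of_mem, hn]
      have h4 : ∀ i ∈ Finset.univ.erase c, (1:ℕ) = G.degree i :=
        (@Finset.sum_eq_sum_iff_of_le V ℕ _ _ _ (Finset.univ.erase c) (fun _ => 1) (fun v => G.degree v)
          (fun i _ => hd1 i)).1 (h3.trans h2.symm)
      intro v hv
      exact ((h4 v (Finset.mem_erase.2 ⟨hv, Finset.mem_univ v⟩))).symm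
    -- c is adjacent to everything else
    have hcnbr : G.neighborFinset c = Finset.univ.erase c := by
      apply Finset.eq_of_subset_of_card_le
      · intro x hx
        rw [SimpleGraph.mem_neighborFinset] at hx
        exact Finset.mem_erase.2 ⟨hx.ne', Finset.mem_univ x⟩
      · rw [Finset.card_erase_of_mem (Finset.mem_univ c), Finset.card_univ, hn,
          SimpleGraph.card_neighborFinset_eq_degree, hc]
    have hcadj : ∀ x : V, G.Adj c x ↔ x ≠ c := by
      intro x
      rw [← SimpleGraph.mem_neighborFinset, hcnbr, Finset.mem_erase]
      simp
    have hxnbr : ∀ x : V, x ≠ c → G.neighborFinset x = {c} := by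
      intro x hx
      symm
      apply Finset.eq_of_subset_of_card_le
      · rw [Finset.singleton_subset_iff, SimpleGraph.mem_neighborFinset]
        exact ((hcadj x).2 hx).symm
      · rw [SimpleGraph.card_neighborFinset_eq_degree, hrest x hx, Finset.card_singleton]
    refine ⟨c, fun x y => ?_⟩
    constructor
    · intro hxy
      by_cases hx : x = c
      · subst hx
        exact Or.inl ⟨rfl, hxy.ne'⟩
      · have : y ∈ G.neighborFinset x := (SimpleGraph.mem_neighborFinset _ _ _).2 hxy
        rw [hxnbr x hx, Finset.mem_singleton] at this
        exact Or.inr ⟨this, hx⟩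
    · rintro (⟨rfl, hy⟩ | ⟨rfl, hx⟩)
      · exact (hcadj y).2 hy
      · exact ((hcadj x).2 hx).symm
  · -- star → equality
    rintro ⟨c, hadj⟩
    have hcnbr : G.neighborFinset c = Finset.univ.erase c := by
      ext x
      rw [SimpleGraph.mem_neighborFinset, hadj, Finset.mem_erase]
      simp
    have hdc : G.degree c = n - 1 := by
      rw [SimpleGraph.degree, hcnbr, Finset.card_erase_of_mem (Finset.mem_univ c),
        Finset.card_univ, hn]
    have hdx : ∀ x : V, x ≠ c → G.degree x = 1 := by
      intro x hx
      have : G.neighborFinset x = {c} := by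
        ext y
        rw [SimpleGraph.mem_neighborFinset, hadj]
        simp [hx]
      rw [SimpleGraph.degree, this, Finset.card_singleton]
    have hdcr : ((G.degree c : ℝ)) = m := by
      rw [hdc, hm_def, Nat.cast_sub (by omega), Nat.cast_one]
    rw [hrandic, ← Finset.add_sum_erase _ _ (Finset.mem_univ c), hdcr]
    have hsum1 : ∑ v ∈ Finset.univ.erase c, ((G.degree v : ℝ)) ^ (a+1) = (n:ℝ) - 1 := by
      rw [Finset.sum_congr rfl (fun v hv => ?_)]
      · rw [Finset.sum_const, Finset.card_erase_of_mem (Finset.mem_univ c), Finset.card_univ, hn,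
          nsmul_eq_mul, mul_one, Nat.cast_sub (by omega), Nat.cast_one]
      · rw [hdx v (Finset.mem_erase.1 hv).1, Nat.cast_one, Real.one_rpow]
    rw [hsum1, hcomm]
    ring
end

section
/- Let G be a connected simple graph, let u be a vertex of G with d_G(u) = 1 and let v be the unique neighbor of u. Let G' = G − u. Let D be an orientation of G and let D' be an orientation of G' that orients every edge of G' in the same direction as D. Then for every real a ≥ 1, R⁰_{a+1}(D) − R⁰_{a+1}(D') ≤ (1/2)·[1 + (d_G(v))^{a+1} − (d_G(v)−1)^{a+1}], with equality if and only if max{d⁺_D(v), d⁻_D(v)} = d_G(v). -/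
section Aux

open Real Finset

private lemma rpow_mul_self (n : ℕ) {a : ℝ} (ha : 0 < a) :
    (n : ℝ) ^ a * n = (n : ℝ) ^ (a + 1) := by
  rcases eq_or_ne n 0 with h | h
  · subst h
    simp [Real.zero_rpow ha.ne', Real.zero_rpow (by positivity : a + 1 ≠ 0)]
  · rw [Real.rpow_add_one (by exact_mod_cast h) a]

private lemma card_filter_out {V : Type*} [Fintype V] {G : SimpleGraph V}
    (D : G.Orientation) (x : V) [DecidablePred (D.arc x)] :
    (Finset.univ.filter fun y => D.arc x y).card = D.outDeg x := by
  simp only [SimpleGraph.Orientation.outDeg]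
  rw [← Set.ncard_coe_finset]
  congr 1
  ext y
  simp

private lemma card_filter_in {V : Type*} [Fintype V] {G : SimpleGraph V}
    (D : G.Orientation) (y : V) [DecidablePred (fun x => D.arc x y)] :
    (Finset.univ.filter fun x => D.arc x y).card = D.inDeg y := by
  simp only [SimpleGraph.Orientation.inDeg]
  rw [← Set.ncard_coe_finset]
  congr 1
  ext x
  simp

private lemma randic_eq_sum {V : Type*} [Fintype V] {G : SimpleGraph V}
    (D : G.Orientation) {a : ℝ} (ha : 0 < a) :
    D.randic a = (1 / 2) * ∑ x : V,
      ((D.outDeg x : ℝ) ^ (a + 1) + (D.inDeg x : ℝ) ^ (a + 1)) := by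
  classical
  simp only [SimpleGraph.Orientation.randic]
  congr 1
  rw [Finset.sum_add_distrib, Finset.sum_add_distrib]
  congr 1
  · rw [Finset.sum_filter, Fintype.sum_prod_type]
    refine Finset.sum_congr rfl fun x _ => ?_
    dsimp only
    rw [← Finset.sum_filter, Finset.sum_const, nsmul_eq_mul, card_filter_out,
      mul_comm, rpow_mul_self _ ha]
  · rw [Finset.sum_filter, Fintype.sum_prod_type, Finset.sum_comm]
    refine Finset.sum_congr rfl fun y _ => ?_
    dsimp only
    rw [← Finset.sum_filter, Finset.sum_const, nsmul_eq_mul, card_filter_in,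
      mul_comm, rpow_mul_self _ ha]

private lemma strictMonoOn_f {p : ℝ} (hp : 1 < p) :
    StrictMonoOn (fun x : ℝ => x ^ p - (x - 1) ^ p) (Set.Ici (1:ℝ)) := by
  have hder : ∀ x : ℝ, HasDerivAt (fun x : ℝ => x ^ p - (x - 1) ^ p)
      (p * x ^ (p - 1) - 1 * p * (x - 1) ^ (p - 1)) x := by
    intro x
    have h1 : HasDerivAt (fun x : ℝ => x ^ p) (p * x ^ (p - 1)) x :=
      Real.hasDerivAt_rpow_const (Or.inr hp.le)
    have h2 : HasDerivAt (fun x : ℝ => (x - 1) ^ p) (1 * p * (x - 1) ^ (p - 1)) x :=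
      ((hasDerivAt_id x).sub_const 1).rpow_const (Or.inr hp.le)
    exact h1.sub h2
  apply strictMonoOn_of_deriv_pos (convex_Ici 1)
  · exact (Differentiable.continuous fun x => (hder x).differentiableAt).continuousOn
  · intro x hx
    rw [interior_Ici, Set.mem_Ioi] at hx
    rw [(hder x).deriv]
    have h0 : (0:ℝ) ≤ x - 1 := by linarith
    have hlt : (x - 1) ^ (p - 1) < x ^ (p - 1) :=
      Real.rpow_lt_rpow h0 (by linarith) (by linarith)
    have hp0 : (0:ℝ) < p := by linarith
    nlinarith

private def revO {V : Type*} {G : SimpleGraph V} (D : G.Orientation) : G.Orientation where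
  arc x y := D.arc y x
  adj_of_arc x y h := (D.adj_of_arc y x h).symm
  arc_total x y h := D.arc_total y x h.symm
  arc_asymm x y h := D.arc_asymm y x h

private lemma revO_outDeg {V : Type*} {G : SimpleGraph V} (D : G.Orientation) (x : V) :
    (revO D).outDeg x = D.inDeg x := rfl

private lemma revO_inDeg {V : Type*} {G : SimpleGraph V} (D : G.Orientation) (x : V) :
    (revO D).inDeg x = D.outDeg x := rfl

private lemma revO_randic {V : Type*} [Fintype V] {G : SimpleGraph V}
    (D : G.Orientation) (a : ℝ) :
    (revO D).randic a = D.randic a := by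
  classical
  simp only [SimpleGraph.Orientation.randic]
  congr 1
  refine Finset.sum_equiv (Equiv.prodComm V V) ?_ ?_
  · intro p
    simp only [Finset.mem_filter, Finset.mem_univ, true_and, Equiv.prodComm_apply,
      Prod.fst_swap, Prod.snd_swap]
    exact Iff.rfl
  · intro p hp
    simp only [Equiv.prodComm_apply, Prod.fst_swap, Prod.snd_swap,
      revO_outDeg, revO_inDeg]
    ring

private lemma main_case {V : Type*} [Fintype V] (G G' : SimpleGraph V)
    (u v : V) (hnbr : G.neighborSet u = {v})
    (hG' : ∀ x y, G'.Adj x y ↔ (G.Adj x y ∧ x ≠ u ∧ y ≠ u))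
    (D : G.Orientation) (D' : G'.Orientation)
    (hDD' : ∀ x y, D'.arc x y → D.arc x y)
    (a : ℝ) (ha : 1 ≤ a) (hauv : D.arc u v) :
    D.randic a - D'.randic a ≤
      (1 / 2) * (1 + ((G.neighborSet v).ncard : ℝ) ^ (a + 1) -
        (((G.neighborSet v).ncard : ℝ) - 1) ^ (a + 1)) ∧
    (D.randic a - D'.randic a =
      (1 / 2) * (1 + ((G.neighborSet v).ncard : ℝ) ^ (a + 1) -
        (((G.neighborSet v).ncard : ℝ) - 1) ^ (a + 1)) ↔
      max (D.outDeg v) (D.inDeg v) = (G.neighborSet v).ncard) := by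
  classical
  have ha0 : (0:ℝ) < a := lt_of_lt_of_le one_pos ha
  have hGuv : G.Adj u v := by
    have h : v ∈ G.neighborSet u := by rw [hnbr]; exact Set.mem_singleton v
    exact h
  have huv : u ≠ v := G.ne_of_adj hGuv
  have hadj_u : ∀ y, G.Adj u y → y = v := by
    intro y hy
    have h : y ∈ G.neighborSet u := hy
    rwa [hnbr, Set.mem_singleton_iff] at h
  have harc' : ∀ x y, D'.arc x y ↔ D.arc x y ∧ x ≠ u ∧ y ≠ u := by
    intro x y
    constructor
    · intro h
      exact ⟨hDD' x y h, ((hG' x y).1 (D'.adj_of_arc x y h)).2⟩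
    · rintro ⟨h, hx, hy⟩
      have hadj' : G'.Adj x y := (hG' x y).2 ⟨D.adj_of_arc x y h, hx, hy⟩
      rcases D'.arc_total x y hadj' with h' | h'
      · exact h'
      · exact absurd (hDD' y x h') (D.arc_asymm x y h)
  have harc_u1 : ∀ y, D.arc u y → y = v := fun y h => hadj_u y (D.adj_of_arc u y h)
  have harc_u2 : ∀ y, D.arc y u → y = v := fun y h => hadj_u y (D.adj_of_arc y u h).symm
  have hOu : D.outDeg u = 1 := by
    have hset : {y | D.arc u y} = {v} := by
      ext y
      simp only [Set.mem_setOf_eq, Set.mem_singleton_iff]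
      exact ⟨harc_u1 y, fun h => h ▸ hauv⟩
    simp [SimpleGraph.Orientation.outDeg, hset]
  have hIu : D.inDeg u = 0 := by
    have hset : {y | D.arc y u} = (∅ : Set V) := by
      ext y
      simp only [Set.mem_setOf_eq, Set.mem_empty_iff_false, iff_false]
      intro h
      have hy := harc_u2 y h
      subst hy
      exact D.arc_asymm u y hauv h
    simp [SimpleGraph.Orientation.inDeg, hset]
  have hOu' : D'.outDeg u = 0 := by
    have hset : {y | D'.arc u y} = (∅ : Set V) := by
      ext y
      simp only [Set.mem_setOf_eq, Set.mem_empty_iff_false, iff_false]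
      intro h
      exact ((harc' u y).1 h).2.1 rfl
    simp [SimpleGraph.Orientation.outDeg, hset]
  have hIu' : D'.inDeg u = 0 := by
    have hset : {y | D'.arc y u} = (∅ : Set V) := by
      ext y
      simp only [Set.mem_setOf_eq, Set.mem_empty_iff_false, iff_false]
      intro h
      exact ((harc' y u).1 h).2.2 rfl
    simp [SimpleGraph.Orientation.inDeg, hset]
  have hOv : D'.outDeg v = D.outDeg v := by
    have hset : {y | D'.arc v y} = {y | D.arc v y} := by
      ext y
      simp only [Set.mem_setOf_eq]
      constructor
      · exact fun h => hDD' v y h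
      · intro h
        refine (harc' v y).2 ⟨h, huv.symm, ?_⟩
        intro hy; rw [hy] at h
        exact D.arc_asymm u v hauv h
    simp [SimpleGraph.Orientation.outDeg, hset]
  have hIv : D.inDeg v = D'.inDeg v + 1 := by
    have hset : {y | D.arc y v} = insert u {y | D'.arc y v} := by
      ext y
      simp only [Set.mem_setOf_eq, Set.mem_insert_iff]
      constructor
      · intro h
        rcases eq_or_ne y u with hy | hy
        · exact Or.inl hy
        · exact Or.inr ((harc' y v).2 ⟨h, hy, huv.symm⟩)
      · rintro (h | h)
        · subst h; exact hauv
        · exact hDD' y v h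
    have hu : u ∉ {y | D'.arc y v} := fun h => ((harc' u v).1 h).2.1 rfl
    simp only [SimpleGraph.Orientation.inDeg]
    rw [hset, Set.ncard_insert_of_notMem hu (Set.toFinite _)]
  have hother : ∀ w, w ≠ u → w ≠ v →
      D'.outDeg w = D.outDeg w ∧ D'.inDeg w = D.inDeg w := by
    intro w hwu hwv
    constructor
    · have hset : {y | D'.arc w y} = {y | D.arc w y} := by
        ext y
        simp only [Set.mem_setOf_eq]
        refine ⟨hDD' w y, fun h => (harc' w y).2 ⟨h, hwu, ?_⟩⟩
        intro hy; rw [hy] at h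
        exact hwv (harc_u2 w h)
      simp [SimpleGraph.Orientation.outDeg, hset]
    · have hset : {y | D'.arc y w} = {y | D.arc y w} := by
        ext y
        simp only [Set.mem_setOf_eq]
        refine ⟨hDD' y w, fun h => (harc' y w).2 ⟨h, ?_, hwu⟩⟩
        intro hy; rw [hy] at h
        exact hwv (harc_u1 w h)
      simp [SimpleGraph.Orientation.inDeg, hset]
  have hsum : D.outDeg v + D.inDeg v = (G.neighborSet v).ncard := by
    have hpart : {y | D.arc v y} ∪ {y | D.arc y v} = G.neighborSet v := by
      ext y
      simp only [Set.mem_union, Set.mem_setOf_eq, SimpleGraph.mem_neighborSet]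
      constructor
      · rintro (h | h)
        · exact D.adj_of_arc v y h
        · exact (D.adj_of_arc y v h).symm
      · intro h
        exact D.arc_total v y h
    have hdisj : Disjoint {y | D.arc v y} {y | D.arc y v} := by
      rw [Set.disjoint_left]
      intro y h1 h2
      exact D.arc_asymm v y h1 h2
    have hcu := Set.ncard_union_eq hdisj (Set.toFinite _) (Set.toFinite _)
    rw [hpart] at hcu
    exact hcu.symm
  set d : ℕ := (G.neighborSet v).ncard with hd
  set k : ℕ := D.inDeg v with hk
  have hk1 : 1 ≤ k := by omega
  have hkd : k ≤ d := by omega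
  have hR : D.randic a - D'.randic a
      = (1 / 2) * (1 + (k:ℝ) ^ (a + 1) - ((k:ℝ) - 1) ^ (a + 1)) := by
    rw [randic_eq_sum D ha0, randic_eq_sum D' ha0, ← mul_sub, ← Finset.sum_sub_distrib]
    have hzero : ∀ x ∈ Finset.univ, x ∉ ({u, v} : Finset V) →
        ((D.outDeg x : ℝ) ^ (a + 1) + (D.inDeg x : ℝ) ^ (a + 1)) -
        ((D'.outDeg x : ℝ) ^ (a + 1) + (D'.inDeg x : ℝ) ^ (a + 1)) = 0 := by
      intro x _ hx
      simp only [Finset.mem_insert, Finset.mem_singleton, not_or] at hx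
      obtain ⟨h1, h2⟩ := hother x hx.1 hx.2
      rw [h1, h2]
      ring
    rw [← Finset.sum_subset (Finset.subset_univ ({u, v} : Finset V)) hzero,
      Finset.sum_pair huv]
    have hIv' : (D'.inDeg v : ℝ) = (k:ℝ) - 1 := by
      have h : D'.inDeg v + 1 = k := hIv.symm
      push_cast [← h]
      ring
    rw [hOu, hIu, hOu', hIu', hOv, hIv']
    push_cast
    rw [Real.one_rpow, Real.zero_rpow (by positivity : a + 1 ≠ 0)]
    ring
  have hp : (1:ℝ) < a + 1 := by linarith
  have h1k : (1:ℝ) ≤ (k:ℝ) := by exact_mod_cast hk1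
  have h1d : (1:ℝ) ≤ (d:ℝ) := le_trans h1k (by exact_mod_cast hkd)
  have hmem_k : (k:ℝ) ∈ Set.Ici (1:ℝ) := h1k
  have hmem_d : (d:ℝ) ∈ Set.Ici (1:ℝ) := h1d
  have hmono := strictMonoOn_f hp
  have hle : (k:ℝ) ^ (a + 1) - ((k:ℝ) - 1) ^ (a + 1)
      ≤ (d:ℝ) ^ (a + 1) - ((d:ℝ) - 1) ^ (a + 1) :=
    hmono.monotoneOn hmem_k hmem_d (by exact_mod_cast hkd)
  have hmax : max (D.outDeg v) k = d ↔ k = d := by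
    rcases Nat.le_total (D.outDeg v) k with h | h
    · rw [Nat.max_eq_right h]
    · rw [Nat.max_eq_left h]
      constructor <;> intro <;> omega
  constructor
  · rw [hR]
    linarith
  · rw [hR, hmax]
    constructor
    · intro h
      have heq : (k:ℝ) ^ (a + 1) - ((k:ℝ) - 1) ^ (a + 1)
          = (d:ℝ) ^ (a + 1) - ((d:ℝ) - 1) ^ (a + 1) := by linarith
      have hcast : (k:ℝ) = (d:ℝ) := hmono.injOn hmem_k hmem_d heq
      exact_mod_cast hcast
    · intro h
      rw [h]

end Aux

/-- deleting a pendant vertex `u` with neighbor `v` from a connected graph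
changes the Randić index of compatible orientations by at most
`(1/2)(1 + d_G(v)^(a+1) - (d_G(v)-1)^(a+1))`, with equality iff
`max(d⁺_D(v), d⁻_D(v)) = d_G(v)`. -/
theorem randic_sub_le_of_delete_pendant
    {V : Type*} [Fintype V] (G G' : SimpleGraph V) (hconn : G.Connected)
    (u v : V) (hdeg : (G.neighborSet u).ncard = 1) (hnbr : G.neighborSet u = {v})
    (hG' : ∀ x y, G'.Adj x y ↔ (G.Adj x y ∧ x ≠ u ∧ y ≠ u))
    (D : G.Orientation) (D' : G'.Orientation)
    (hDD' : ∀ x y, D'.arc x y → D.arc x y)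
    (a : ℝ) (ha : 1 ≤ a) :
    D.randic a - D'.randic a ≤
      (1 / 2) * (1 + ((G.neighborSet v).ncard : ℝ) ^ (a + 1) -
        (((G.neighborSet v).ncard : ℝ) - 1) ^ (a + 1)) ∧
    (D.randic a - D'.randic a =
      (1 / 2) * (1 + ((G.neighborSet v).ncard : ℝ) ^ (a + 1) -
        (((G.neighborSet v).ncard : ℝ) - 1) ^ (a + 1)) ↔
      max (D.outDeg v) (D.inDeg v) = (G.neighborSet v).ncard) := by
  classical
  have hGuv : G.Adj u v := by
    have h : v ∈ G.neighborSet u := by rw [hnbr]; exact Set.mem_singleton v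
    exact h
  rcases D.arc_total u v hGuv with h | h
  · exact main_case G G' u v hnbr hG' D D' hDD' a ha h
  · have H := main_case G G' u v hnbr hG' (revO D) (revO D')
      (fun x y hxy => hDD' y x hxy) a ha h
    rwa [revO_randic, revO_randic, revO_outDeg, revO_inDeg, max_comm] at H
end

section
/- Let G be a connected unicyclic graph with n ≥ 3 vertices (a connected graph with exactly one cycle), let D be an orientation of G, and let a ≥ 1 be a real number. Then R⁰_{a+1}(D) ≤ (1/2)·[(n−1)^{a+1} + n − 1 + 2^{a+1}]. -/
-- ===== auxiliary development =====

open Real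

lemma aux_chord {s : ℝ} (h0 : 0 ≤ s) (h1 : s ≤ 1) : (2:ℝ) ^ s ≤ 1 + s := by
  have := rpow_one_add_le_one_add_mul_self (s := 1) (by norm_num) h0 h1
  norm_num at this
  linarith

lemma aux_L2 {a : ℝ} (ha : 1 ≤ a) : (2:ℝ) ^ (a + 1) ≤ 3 ^ a + 1 := by
  have h32 : (1:ℝ) + a * (1/2) ≤ (1 + 1/2) ^ a :=
    one_add_mul_self_le_rpow_one_add (by norm_num) ha
  have h3 : (3:ℝ) ^ a = 2 ^ a * (3/2) ^ a := by
    rw [← Real.mul_rpow (by norm_num) (by norm_num)]; norm_num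
  have h2pos : (0:ℝ) < 2 ^ a := Real.rpow_pos_of_pos (by norm_num) a
  have hsplit : (2:ℝ) ^ (a+1) = 2 ^ a * 2 := by
    rw [Real.rpow_add (by norm_num), Real.rpow_one]
  have h32' : (2:ℝ) ^ a * (1 + a/2) ≤ 3 ^ a := by
    rw [h3]
    have h15 : (1:ℝ) + a/2 ≤ (3/2) ^ a := by
      have e : ((1:ℝ) + 1/2) = 3/2 := by norm_num
      rw [← e]; linarith [h32]
    nlinarith
  have key : (2:ℝ) ^ a * 2 ≤ 2 ^ a * (1 + a/2) + 1 := by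
    rcases le_or_gt 2 a with h2a | h2a
    · nlinarith
    · have hb : (2:ℝ) ^ a ≤ 2 * a := by
        have e : (2:ℝ) ^ a = 2 * 2 ^ (a - 1) := by
          have h := Real.rpow_add (show (0:ℝ) < 2 by norm_num) 1 (a-1)
          rw [show (1:ℝ) + (a-1) = a by ring, Real.rpow_one] at h
          exact h
        have hc := aux_chord (s := a - 1) (by linarith) (by linarith)
        rw [e]; nlinarith
      nlinarith [sq_nonneg (a - 1)]
  rw [hsplit]; linarith

lemma aux_incr {t u v : ℝ} (ht : 1 ≤ t) (hu : 1 ≤ u) (huv : u ≤ v) :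
    u ^ t - (u - 1) ^ t ≤ v ^ t - (v - 1) ^ t := by
  rcases eq_or_lt_of_le huv with rfl | hlt
  · exact le_refl _
  have hcv : ConvexOn ℝ (Set.Ici 0) (fun x : ℝ => x ^ t) := convexOn_rpow ht
  have m1 : (u - 1) ∈ Set.Ici (0:ℝ) := by simp; linarith
  have m2 : u ∈ Set.Ici (0:ℝ) := by simp; linarith
  have m3 : (v - 1) ∈ Set.Ici (0:ℝ) := by simp; linarith
  have m4 : v ∈ Set.Ici (0:ℝ) := by simp; linarith
  by_cases hm : u = v - 1
  · have h1 := hcv.secant_mono m2 m1 m4 (by linarith) (by linarith) (by linarith)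
    have e1 : (u - 1) - u = -1 := by ring
    rw [e1] at h1
    rw [div_neg, div_one] at h1
    have e2 : v - u = 1 := by rw [hm]; ring
    rw [e2, div_one] at h1
    rw [← hm]
    linarith
  · have h1 := hcv.secant_mono m2 m1 m3 (by linarith) (fun h => hm (by linarith [h])) (by linarith)
    have h2 := hcv.secant_mono m3 m2 m4 (fun h => hm (by linarith [h])) (by intro h; linarith) (by linarith)
    have e1 : (u - 1) - u = -1 := by ring
    rw [e1, div_neg, div_one] at h1
    have e2 : v - (v - 1) = 1 := by ring
    rw [e2, div_one] at h2
    have e3 : ((v-1:ℝ) ^ t - u ^ t) / ((v - 1) - u) = (u ^ t - (v-1) ^ t) / (u - (v - 1)) := by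
      rw [← neg_div_neg_eq, neg_sub, neg_sub]
    rw [e3] at h1
    linarith

namespace SimpleGraph.Orientation

variable {V : Type*} {G : SimpleGraph V} (D : G.Orientation)

open Finset in
open scoped Classical in
lemma outDeg_eq_card [Fintype V] (u : V) :
    D.outDeg u = (univ.filter (fun v => D.arc u v)).card := by
  classical
  rw [outDeg, Set.ncard_eq_toFinset_card']
  congr 1
  simp [Set.toFinset_setOf]

open Finset in
open scoped Classical in
lemma inDeg_eq_card [Fintype V] (v : V) :
    D.inDeg v = (univ.filter (fun u => D.arc u v)).card := by
  classical
  rw [inDeg, Set.ncard_eq_toFinset_card']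
  congr 1
  simp [Set.toFinset_setOf]

open Finset in
open scoped Classical in
lemma sum_arc_fst [Fintype V] {M : Type*} [AddCommMonoid M] (g : V → M) :
    ∑ p ∈ univ.filter (fun p : V × V => D.arc p.1 p.2), g p.1
      = ∑ u, D.outDeg u • g u := by
  classical
  rw [Finset.sum_filter, ← Finset.univ_product_univ, Finset.sum_product]
  refine Finset.sum_congr rfl (fun u _ => ?_)
  rw [outDeg_eq_card]
  have : ∀ a : V, (ite (D.arc (u, a).1 (u, a).2) (g (u, a).1) 0) = ite (D.arc u a) (g u) 0 :=
    fun a => rfl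
  simp only [this]
  rw [← Finset.sum_filter, Finset.sum_const]

open Finset in
open scoped Classical in
lemma sum_arc_snd [Fintype V] {M : Type*} [AddCommMonoid M] (g : V → M) :
    ∑ p ∈ univ.filter (fun p : V × V => D.arc p.1 p.2), g p.2
      = ∑ v, D.inDeg v • g v := by
  classical
  rw [Finset.sum_filter, ← Finset.univ_product_univ, Finset.sum_product]
  rw [Finset.sum_comm]
  refine Finset.sum_congr rfl (fun v _ => ?_)
  rw [inDeg_eq_card]
  have : ∀ a : V, (ite (D.arc (a, v).1 (a, v).2) (g (a, v).2) 0) = ite (D.arc a v) (g v) 0 :=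
    fun a => rfl
  simp only [this]
  rw [← Finset.sum_filter, Finset.sum_const]

lemma sum_outDeg_eq_sum_inDeg [Fintype V] :
    ∑ u, D.outDeg u = ∑ v, D.inDeg v := by
  classical
  have h1 := D.sum_arc_fst (fun _ => (1:ℕ))
  have h2 := D.sum_arc_snd (fun _ => (1:ℕ))
  simp only [smul_eq_mul, mul_one] at h1 h2
  rw [← h1, ← h2]

lemma outDeg_add_inDeg [Fintype V] (v : V) :
    D.outDeg v + D.inDeg v = (G.neighborSet v).ncard := by
  classical
  rw [outDeg, inDeg, ← Set.ncard_union_eq ?_ (Set.toFinite _) (Set.toFinite _)]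
  · congr 1
    ext u
    simp only [Set.mem_union, Set.mem_setOf_eq, SimpleGraph.mem_neighborSet]
    constructor
    · rintro (h | h)
      · exact D.adj_of_arc v u h
      · exact (D.adj_of_arc u v h).symm
    · intro h
      exact D.arc_total v u h
  · rw [Set.disjoint_left]
    intro u h1 h2
    exact D.arc_asymm v u h1 h2

lemma inDeg_lt_card [Fintype V] (v : V) : D.inDeg v < Fintype.card V := by
  classical
  rw [inDeg]
  have hsub : {u | D.arc u v} ⊂ Set.univ := by
    rw [Set.ssubset_univ_iff]
    intro h
    have : v ∈ {u | D.arc u v} := by rw [h]; exact Set.mem_univ v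
    exact (D.adj_of_arc v v this).ne rfl
  have := Set.ncard_lt_ncard hsub (Set.finite_univ)
  rwa [Set.ncard_univ, Nat.card_eq_fintype_card] at this


/-- reversal of an orientation -/
def rev (D : G.Orientation) : G.Orientation where
  arc u v := D.arc v u
  adj_of_arc u v h := (D.adj_of_arc v u h).symm
  arc_total u v h := (D.arc_total v u h.symm)
  arc_asymm u v h hh := D.arc_asymm v u h hh

lemma outDeg_rev (u : V) : D.rev.outDeg u = D.inDeg u := rfl

lemma inDeg_rev (u : V) : D.rev.inDeg u = D.outDeg u := rfl

end SimpleGraph.Orientation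

section WalkAvoid

open SimpleGraph

lemma walk_avoid {V : Type*} {G : SimpleGraph V} {w nb : V}
    (h_uniq : ∀ u, G.Adj w u → u = nb) :
    ∀ (L : ℕ) {s t : V} (p : G.Walk s t), p.length ≤ L → ∀ (hs : s ≠ w) (ht : t ≠ w),
    (G.comap (Subtype.val : {v : V // v ≠ w} → V)).Reachable ⟨s, hs⟩ ⟨t, ht⟩ := by
  intro L
  induction L with
  | zero =>
    intro s t p hl hs ht
    cases p with
    | nil => exact Reachable.refl _
    | cons h q => simp [SimpleGraph.Walk.length_cons] at hl
  | succ L ih =>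
    intro s t p hl hs ht
    cases p with
    | nil => exact Reachable.refl _
    | @cons _ b _ h q =>
      by_cases hb : b = w
      · subst hb
        cases q with
        | nil => exact absurd rfl ht
        | @cons _ c _ h2 r =>
          have hc : c = nb := h_uniq c h2
          have hs2 : s = nb := h_uniq s h.symm
          have hcs : c = s := hc.trans hs2.symm
          subst hcs
          have hlen : r.length ≤ L := by
            simp [SimpleGraph.Walk.length_cons] at hl; omega
          exact ih r hlen hs ht
      · have hlen : q.length ≤ L := by
          simp [SimpleGraph.Walk.length_cons] at hl; omega
        have hr := ih q hlen hb ht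
        have hadj : (G.comap (Subtype.val : {v : V // v ≠ w} → V)).Adj ⟨s, hs⟩ ⟨b, hb⟩ := h
        exact (hadj.reachable).trans hr

end WalkAvoid

universe u

open Finset

lemma sum_split {V : Type u} [Fintype V] [DecidableEq V] (w : V) {M : Type*} [AddCommMonoid M]
    (F : V → M) :
    ∑ v, F v = F w + ∑ v : {v : V // v ≠ w}, F v.val := by
  rw [← Finset.add_sum_erase _ F (Finset.mem_univ w)]
  congr 1
  exact (Finset.sum_subtype (p := fun v => v ≠ w) (Finset.univ.erase w)
    (by intro x; simp [Finset.mem_erase]) F)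

lemma main_step {V : Type u} [Fintype V] {G : SimpleGraph V} (D : G.Orientation) (a : ℝ)
    (ha : 1 ≤ a) (n : ℕ) (hn : Fintype.card V = n) (hn4 : 4 ≤ n) (hconn : G.Connected)
    (hx : ∑ v, D.outDeg v = n) (hy : ∑ v, D.inDeg v = n)
    (w nb : V) (h_adj : G.Adj w nb) (h_uniq : ∀ u, G.Adj w u → u = nb) (harc : D.arc w nb)
    (IH : ∀ {V' : Type u} [Fintype V'] (G' : SimpleGraph V') (D' : G'.Orientation),
        Fintype.card V' = n - 1 → G'.Connected →
        (∑ v, D'.outDeg v) = n - 1 → (∑ v, D'.inDeg v) = n - 1 →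
        ∑ v, ((D'.outDeg v : ℝ) ^ (a+1) + (D'.inDeg v : ℝ) ^ (a+1))
          ≤ ((n:ℝ) - 2) ^ (a+1) + 2 ^ (a+1) + ((n:ℝ) - 2)) :
    ∑ v, ((D.outDeg v : ℝ) ^ (a+1) + (D.inDeg v : ℝ) ^ (a+1))
      ≤ ((n:ℝ) - 1) ^ (a+1) + 2 ^ (a+1) + ((n:ℝ) - 1) := by
  classical
  have hwnb : w ≠ nb := h_adj.ne
  have noarc_to_w : ∀ u, ¬ D.arc u w := by
    intro u hu
    have hadj : G.Adj w u := (D.adj_of_arc u w hu).symm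
    have he := h_uniq u hadj
    subst he
    exact D.arc_asymm w u harc hu
  have hout_w : {u | D.arc w u} = {nb} := by
    ext u
    simp only [Set.mem_setOf_eq, Set.mem_singleton_iff]
    exact ⟨fun h => h_uniq u (D.adj_of_arc w u h), fun h => h ▸ harc⟩
  have houtw : D.outDeg w = 1 := by
    rw [SimpleGraph.Orientation.outDeg, hout_w, Set.ncard_singleton]
  have hinw : D.inDeg w = 0 := by
    rw [SimpleGraph.Orientation.inDeg]
    have : {u | D.arc u w} = ∅ := by
      ext u; simp only [Set.mem_setOf_eq, Set.mem_empty_iff_false, iff_false]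
      exact noarc_to_w u
    rw [this, Set.ncard_empty]
  -- the smaller graph
  set G' : SimpleGraph {v : V // v ≠ w} := G.comap Subtype.val with hG'
  set D' : G'.Orientation :=
    ⟨fun x y => D.arc x.val y.val, fun x y h => D.adj_of_arc _ _ h,
      fun x y h => D.arc_total _ _ h, fun x y h => D.arc_asymm _ _ h⟩ with hD'
  -- counting in the subtype
  have hncard : ∀ (P : V → Prop),
      {x : {v : V // v ≠ w} | P x.val}.ncard = ({x : V | P x} \ {w}).ncard := by
    intro P
    have himg : Subtype.val '' {x : {v : V // v ≠ w} | P x.val} = {x : V | P x} \ {w} := by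
      ext x
      constructor
      · rintro ⟨⟨y, hy⟩, hPy, rfl⟩
        exact ⟨hPy, hy⟩
      · rintro ⟨hPx, hxw⟩
        exact ⟨⟨x, hxw⟩, hPx, rfl⟩
    rw [← himg, Set.ncard_image_of_injective _ Subtype.val_injective]
  have hA : ∀ v : {v : V // v ≠ w}, D'.outDeg v = D.outDeg v.val := by
    intro v
    show ({x : {v : V // v ≠ w} | D.arc v.val x.val}).ncard = _
    rw [hncard (fun x => D.arc v.val x)]
    rw [Set.diff_singleton_eq_self (by simp only [Set.mem_setOf_eq]; exact noarc_to_w _ ∘ id)]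
    rfl

  have hB : ∀ v : {v : V // v ≠ w}, v.val ≠ nb → D'.inDeg v = D.inDeg v.val := by
    intro v hv
    show ({x : {v : V // v ≠ w} | D.arc x.val v.val}).ncard = _
    rw [hncard (fun x => D.arc x v.val)]
    rw [Set.diff_singleton_eq_self (by
      simp only [Set.mem_setOf_eq]
      intro h
      exact hv (h_uniq v.val (D.adj_of_arc w v.val h)))]
    rfl
  have hnbne : nb ≠ w := Ne.symm hwnb
  set nb' : {v : V // v ≠ w} := ⟨nb, hnbne⟩ with hnb'
  have hval : (nb' : V) = nb := rfl
  have hC : D'.inDeg nb' + 1 = D.inDeg nb := by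
    show ({x : {v : V // v ≠ w} | D.arc x.val nb}).ncard + 1 = _
    rw [hncard (fun x => D.arc x nb)]
    exact Set.ncard_diff_singleton_add_one (by exact harc) (Set.toFinite _)
  have hcard' : Fintype.card {v : V // v ≠ w} = n - 1 := by
    have h2 := Fintype.card_subtype_compl (fun v : V => v = w)
    have h1 : Fintype.card {v : V // v = w} = 1 := Fintype.card_subtype_eq w
    rw [h1, hn] at h2
    exact h2
  have hconn' : G'.Connected := by
    rw [SimpleGraph.connected_iff]
    constructor
    · intro u v
      obtain ⟨p⟩ := hconn.preconnected u.val v.val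
      exact walk_avoid h_uniq p.length p le_rfl u.prop v.prop
    · exact ⟨nb'⟩
  -- sums for D'
  have hsx : (∑ v : {v : V // v ≠ w}, D'.outDeg v) = n - 1 := by
    have h0 := sum_split w (fun v => D.outDeg v)
    rw [hx, houtw] at h0
    have h1 : (∑ v : {v : V // v ≠ w}, D'.outDeg v)
        = ∑ v : {v : V // v ≠ w}, D.outDeg v.val :=
      Finset.sum_congr rfl (fun v _ => hA v)
    omega
  have hin_nb_pos : 1 ≤ D.inDeg nb := by
    have h0 := (Set.ncard_pos (Set.toFinite {u | D.arc u nb})).mpr ⟨w, harc⟩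
    unfold SimpleGraph.Orientation.inDeg
    omega
  have hsplit_in : (∑ v : {v : V // v ≠ w}, D.inDeg v.val) = n := by
    have h0 := sum_split w (fun v => D.inDeg v)
    rw [hy, hinw] at h0
    omega
  have herase_eq : ∀ v ∈ Finset.univ.erase nb', D'.inDeg v = D.inDeg v.val := by
    intro v hv
    exact hB v (fun h => (Finset.mem_erase.mp hv).1 (Subtype.ext h))
  have hsy : (∑ v : {v : V // v ≠ w}, D'.inDeg v) = n - 1 := by
    have e1 := (Finset.add_sum_erase _ (fun v => D'.inDeg v) (Finset.mem_univ nb')).symm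
    have e2 := (Finset.add_sum_erase _ (fun v : {v : V // v ≠ w} => D.inDeg v.val)
      (Finset.mem_univ nb')).symm
    have e3 : (∑ v ∈ Finset.univ.erase nb', D'.inDeg v)
        = ∑ v ∈ Finset.univ.erase nb', D.inDeg v.val :=
      Finset.sum_congr rfl herase_eq
    rw [e1, e3]
    rw [e2, hval] at hsplit_in
    omega
  have hIH := IH G' D' hcard' hconn' hsx hsy
  -- value at w
  have ht1 : (1:ℝ) ≤ a + 1 := by linarith
  have hw_val : ((D.outDeg w : ℝ)) ^ (a+1) + ((D.inDeg w : ℝ)) ^ (a+1) = 1 := by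
    rw [houtw, hinw]
    rw [Nat.cast_one, Nat.cast_zero, Real.one_rpow, Real.zero_rpow (by linarith)]
    norm_num
  -- compare real sums
  have hsum_out_eq : (∑ v : {v : V // v ≠ w}, ((D.outDeg v.val : ℝ)) ^ (a+1))
      = ∑ v : {v : V // v ≠ w}, ((D'.outDeg v : ℝ)) ^ (a+1) :=
    Finset.sum_congr rfl (fun v _ => by rw [hA v])
  have hd'nb : D'.inDeg nb' = D.inDeg nb - 1 := by omega
  have hcast : ((D.inDeg nb - 1 : ℕ) : ℝ) = (D.inDeg nb : ℝ) - 1 := by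
    rw [Nat.cast_sub hin_nb_pos, Nat.cast_one]
  have hsum_in_eq : (∑ v : {v : V // v ≠ w}, ((D.inDeg v.val : ℝ)) ^ (a+1))
      = (∑ v : {v : V // v ≠ w}, ((D'.inDeg v : ℝ)) ^ (a+1))
        + (((D.inDeg nb : ℝ)) ^ (a+1) - ((D.inDeg nb : ℝ) - 1) ^ (a+1)) := by
    have e1 := (Finset.add_sum_erase _
      (fun v : {v : V // v ≠ w} => ((D.inDeg v.val : ℝ)) ^ (a+1)) (Finset.mem_univ nb')).symm
    have e2 := (Finset.add_sum_erase _
      (fun v : {v : V // v ≠ w} => ((D'.inDeg v : ℝ)) ^ (a+1)) (Finset.mem_univ nb')).symm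
    have e3 : (∑ v ∈ Finset.univ.erase nb', ((D'.inDeg v : ℝ)) ^ (a+1))
        = ∑ v ∈ Finset.univ.erase nb', ((D.inDeg v.val : ℝ)) ^ (a+1) :=
      Finset.sum_congr rfl (fun v hv => by rw [herase_eq v hv])
    rw [e1, e2, e3, hd'nb, hval, hcast]
    ring
  -- increment bound
  have hnbn : (D.inDeg nb : ℝ) ≤ (n:ℝ) - 1 := by
    have h0 : D.inDeg nb < n := hn ▸ D.inDeg_lt_card nb
    have : ((D.inDeg nb : ℕ) : ℝ) + 1 ≤ (n : ℝ) := by exact_mod_cast h0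
    linarith
  have hone : (1:ℝ) ≤ (D.inDeg nb : ℝ) := by exact_mod_cast hin_nb_pos
  have hincr := aux_incr ht1 hone hnbn
  have e5 : ((n:ℝ) - 1 - 1) = (n:ℝ) - 2 := by ring
  rw [e5] at hincr
  -- assemble
  have hsplitP := sum_split w (fun v => ((D.outDeg v : ℝ)) ^ (a+1) + ((D.inDeg v : ℝ)) ^ (a+1))
  rw [hsplitP, hw_val]
  have hdist1 : (∑ v : {v : V // v ≠ w},
      (((D.outDeg v.val : ℝ)) ^ (a+1) + ((D.inDeg v.val : ℝ)) ^ (a+1)))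
      = (∑ v : {v : V // v ≠ w}, ((D.outDeg v.val : ℝ)) ^ (a+1))
        + ∑ v : {v : V // v ≠ w}, ((D.inDeg v.val : ℝ)) ^ (a+1) := Finset.sum_add_distrib
  have hdist2 : (∑ v : {v : V // v ≠ w},
      (((D'.outDeg v : ℝ)) ^ (a+1) + ((D'.inDeg v : ℝ)) ^ (a+1)))
      = (∑ v : {v : V // v ≠ w}, ((D'.outDeg v : ℝ)) ^ (a+1))
        + ∑ v : {v : V // v ≠ w}, ((D'.inDeg v : ℝ)) ^ (a+1) := Finset.sum_add_distrib
  rw [hdist1, hsum_out_eq, hsum_in_eq]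
  rw [hdist2] at hIH
  linarith


-- numeric helpers for the 2-regular case
lemma rpow_base_le {a x y : ℝ} (ha : 0 ≤ a) (hx : 0 ≤ x) (hxy : x ≤ y) : x ^ a ≤ y ^ a :=
  Real.rpow_le_rpow hx hxy ha

lemma two_rpow_le {a c : ℝ} (ha : 1 ≤ a) (hc : 4 ≤ c) : (2:ℝ) ^ (a+1) ≤ c ^ a := by
  have h1 : (2:ℝ) ^ (a+1) = 2 ^ a * 2 := by
    rw [Real.rpow_add (by norm_num), Real.rpow_one]
  have h2 : (2:ℝ) ≤ 2 ^ a := by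
    have h := (Real.rpow_le_rpow_left_iff (x := (2:ℝ)) (y := 1) (z := a)
      (by norm_num)).mpr ha
    rwa [Real.rpow_one] at h
  have h4 : (4:ℝ) ^ a ≤ c ^ a := rpow_base_le (by linarith) (by norm_num) hc
  have h3 : (2:ℝ) ^ a * 2 ≤ 4 ^ a := by
    have : (4:ℝ) ^ a = 2 ^ a * 2 ^ a := by
      rw [← Real.mul_rpow (by norm_num) (by norm_num)]; norm_num
    nlinarith [Real.rpow_pos_of_pos (show (0:ℝ) < 2 by norm_num) a]
  linarith

lemma pos_rpow_pos {x a : ℝ} (hx : 0 < x) : (0:ℝ) < x ^ a := Real.rpow_pos_of_pos hx a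

lemma one_le_rpow' {x a : ℝ} (hx : 1 ≤ x) (ha : 0 ≤ a) : (1:ℝ) ≤ x ^ a := by
  calc (1:ℝ) = x ^ (0:ℝ) := (Real.rpow_zero x).symm
  _ ≤ x ^ a := by
      rcases eq_or_lt_of_le hx with rfl | h
      · simp [Real.one_rpow]
      · exact (Real.rpow_le_rpow_left_iff h).mpr ha

lemma four_le_two_rpow {a : ℝ} (ha : 1 ≤ a) : (4:ℝ) ≤ 2 ^ (a+1) := by
  have h1 : (2:ℝ) ^ ((2:ℕ):ℝ) = 4 := by rw [Real.rpow_natCast]; norm_num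
  have h2 : ((2:ℕ):ℝ) = 2 := by norm_num
  rw [h2] at h1
  rw [← h1]
  exact (Real.rpow_le_rpow_left_iff (by norm_num)).mpr (by linarith)

lemma key (a : ℝ) (ha : 1 ≤ a) : ∀ (n : ℕ), 3 ≤ n →
    ∀ {V : Type u} [Fintype V] {G : SimpleGraph V} (D : G.Orientation),
    Fintype.card V = n → G.Connected → (∑ v, D.outDeg v) = n → (∑ v, D.inDeg v) = n →
    ∑ v, ((D.outDeg v : ℝ) ^ (a+1) + (D.inDeg v : ℝ) ^ (a+1))
      ≤ ((n:ℝ) - 1) ^ (a+1) + 2 ^ (a+1) + ((n:ℝ) - 1) := by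
  intro n
  induction n using Nat.strong_induction_on with
  | _ n IH =>
  intro hn3 V _ G D hcard hconn hx hy
  classical
  have hdeg : ∀ v : V, D.outDeg v + D.inDeg v = (G.neighborSet v).ncard :=
    fun v => D.outDeg_add_inDeg v
  have hdeg1 : ∀ v : V, 1 ≤ D.outDeg v + D.inDeg v := by
    intro v
    rw [hdeg v]
    obtain ⟨u, hu⟩ := Fintype.exists_ne_of_one_lt_card (by omega : 1 < Fintype.card V) v
    obtain ⟨p⟩ := hconn.preconnected v u
    cases p with
    | nil => exact absurd rfl hu.symm
    | cons h q =>
      exact (Set.ncard_pos (Set.toFinite _)).mpr ⟨_, h⟩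
  have hdeglt : ∀ v : V, D.outDeg v + D.inDeg v ≤ n - 1 := by
    intro v
    rw [hdeg v]
    have hss : G.neighborSet v ⊂ Set.univ := by
      rw [Set.ssubset_univ_iff]
      intro h
      have : v ∈ G.neighborSet v := by rw [h]; exact Set.mem_univ v
      exact G.irrefl this
    have := Set.ncard_lt_ncard hss Set.finite_univ
    rw [Set.ncard_univ, Nat.card_eq_fintype_card, hcard] at this
    omega
  by_cases hleaf : ∃ x : V, D.outDeg x + D.inDeg x = 1
  · -- leaf case
    obtain ⟨w, hw⟩ := hleaf
    have hw' : (G.neighborSet w).ncard = 1 := by rw [← hdeg w]; exact hw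
    obtain ⟨nb, hnb⟩ := Set.ncard_eq_one.mp hw'
    have h_adj : G.Adj w nb := by
      have : nb ∈ G.neighborSet w := by rw [hnb]; exact Set.mem_singleton nb
      exact this
    have h_uniq : ∀ u, G.Adj w u → u = nb := by
      intro u hu
      have : u ∈ G.neighborSet w := hu
      rw [hnb] at this
      exact this
    have hn4 : 4 ≤ n := by
      by_contra hcon
      have hn3' : n = 3 := by omega
      have hsplitv := (Finset.add_sum_erase Finset.univ
        (fun u => D.outDeg u + D.inDeg u) (Finset.mem_univ w)).symm
      beta_reduce at hsplitv
      have hge := Finset.sum_le_card_nsmul (Finset.univ.erase w)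
        (fun u => D.outDeg u + D.inDeg u) 2
        (fun u _ => by show D.outDeg u + D.inDeg u ≤ 2; have := hdeglt u; omega)
      have hcarde : (Finset.univ.erase w).card = n - 1 := by
        rw [Finset.card_erase_of_mem (Finset.mem_univ w), Finset.card_univ, hcard]
      rw [hcarde] at hge
      simp only [smul_eq_mul] at hge
      have hsumdeg : (∑ v : V, (D.outDeg v + D.inDeg v)) = n + n := by
        rw [Finset.sum_add_distrib, hx, hy]
      omega
    have IH' : ∀ {V' : Type u} [Fintype V'] (G' : SimpleGraph V') (D' : G'.Orientation),
        Fintype.card V' = n - 1 → G'.Connected →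
        (∑ v, D'.outDeg v) = n - 1 → (∑ v, D'.inDeg v) = n - 1 →
        ∑ v, ((D'.outDeg v : ℝ) ^ (a+1) + (D'.inDeg v : ℝ) ^ (a+1))
          ≤ ((n:ℝ) - 2) ^ (a+1) + 2 ^ (a+1) + ((n:ℝ) - 2) := by
      intro V' _ G' D' h1 h2 h3 h4
      have h5 := IH (n-1) (by omega) (by omega) D' h1 h2 h3 h4
      have hc : ((n - 1 : ℕ) : ℝ) = (n:ℝ) - 1 := by
        rw [Nat.cast_sub (by omega), Nat.cast_one]
      rw [hc] at h5
      have e : (n:ℝ) - 1 - 1 = (n:ℝ) - 2 := by ring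
      rw [e] at h5
      exact h5
    rcases D.arc_total w nb h_adj with harc | harc
    · exact main_step D a ha n hcard hn4 hconn hx hy w nb h_adj h_uniq harc IH'
    · have hxr : (∑ v, D.rev.outDeg v) = n := by
        rw [Finset.sum_congr rfl (fun v _ => D.outDeg_rev v)]; exact hy
      have hyr : (∑ v, D.rev.inDeg v) = n := by
        rw [Finset.sum_congr rfl (fun v _ => D.inDeg_rev v)]; exact hx
      have hres := main_step D.rev a ha n hcard hn4 hconn hxr hyr w nb h_adj h_uniq harc IH'
      have hswap : (∑ v, ((D.outDeg v : ℝ) ^ (a+1) + (D.inDeg v : ℝ) ^ (a+1)))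
          = ∑ v, ((D.rev.outDeg v : ℝ) ^ (a+1) + (D.rev.inDeg v : ℝ) ^ (a+1)) :=
        Finset.sum_congr rfl (fun v _ => by rw [D.outDeg_rev, D.inDeg_rev]; ring)
      rw [hswap]
      exact hres
  · -- 2-regular case
    have h2le : ∀ u, 2 ≤ D.outDeg u + D.inDeg u := by
      intro u
      have h1 := hdeg1 u
      have h2 : ¬ (D.outDeg u + D.inDeg u = 1) := fun h => hleaf ⟨u, h⟩
      omega
    have hsumdeg : (∑ v : V, (D.outDeg v + D.inDeg v)) = n + n := by
      rw [Finset.sum_add_distrib, hx, hy]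
    have hall2 : ∀ v, D.outDeg v + D.inDeg v = 2 := by
      intro v
      by_contra hv
      have h3le : 3 ≤ D.outDeg v + D.inDeg v := by have := h2le v; omega
      have hsplitv := (Finset.add_sum_erase Finset.univ
        (fun u => D.outDeg u + D.inDeg u) (Finset.mem_univ v)).symm
      beta_reduce at hsplitv
      have hge := Finset.card_nsmul_le_sum (Finset.univ.erase v)
        (fun u => D.outDeg u + D.inDeg u) 2 (fun u _ => h2le u)
      have hcarde : (Finset.univ.erase v).card = n - 1 := by
        rw [Finset.card_erase_of_mem (Finset.mem_univ v), Finset.card_univ, hcard]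
      rw [hcarde] at hge
      simp only [smul_eq_mul] at hge
      omega
    have hFpos : (0:ℝ) < 2 ^ (a+1) := pos_rpow_pos (by norm_num)
    have hF4 : (4:ℝ) ≤ 2 ^ (a+1) := four_le_two_rpow ha
    have hterm : ∀ v : V, ((D.outDeg v : ℝ) ^ (a+1) + (D.inDeg v : ℝ) ^ (a+1))
        = if D.outDeg v = 1 then (2:ℝ) else 2 ^ (a+1) := by
      intro v
      have h2 := hall2 v
      by_cases h1 : D.outDeg v = 1
      · have hin : D.inDeg v = 1 := by omega
        rw [if_pos h1, h1, hin, Nat.cast_one, Real.one_rpow]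
        norm_num
      · rw [if_neg h1]
        have h0 : D.outDeg v = 0 ∨ D.outDeg v = 2 := by omega
        rcases h0 with h0 | h0
        · have hin : D.inDeg v = 2 := by omega
          rw [h0, hin, Nat.cast_zero, Real.zero_rpow (by linarith : a + 1 ≠ 0)]
          norm_num
        · have hin : D.inDeg v = 0 := by omega
          rw [h0, hin, Nat.cast_zero, Real.zero_rpow (by linarith : a + 1 ≠ 0)]
          norm_num
    rw [Finset.sum_congr rfl (fun v _ => hterm v)]
    rw [Finset.sum_ite]
    simp only [Finset.sum_const, nsmul_eq_mul]
    set k := (Finset.univ.filter (fun v => D.outDeg v = 1)).card with hk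
    set k2 := (Finset.univ.filter (fun v => ¬ D.outDeg v = 1)).card with hk2
    have hkk2 : k + k2 = n := by
      rw [hk, hk2, Finset.card_filter_add_card_filter_not, Finset.card_univ, hcard]
    rcases Nat.eq_zero_or_pos k with hk0 | hk1
    · -- parity case: all outdegrees in {0,2}
      have hne1 : ∀ v : V, ¬ D.outDeg v = 1 := by
        intro v
        have := Finset.card_eq_zero.mp (hk ▸ hk0)
        intro hv
        have hmem : v ∈ Finset.univ.filter (fun v => D.outDeg v = 1) := by
          simp [hv]
        rw [this] at hmem
        exact absurd hmem (Finset.notMem_empty v)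
      have heven : Even n := by
        rw [← hx]
        apply Finset.even_sum
        intro v _
        have h2 := hall2 v
        have h1 := hne1 v
        have : D.outDeg v = 0 ∨ D.outDeg v = 2 := by omega
        rcases this with h | h <;> rw [h] <;> decide
      have hn45 : n = 4 ∨ 5 ≤ n := by
        obtain ⟨r, hr⟩ := heven
        omega
      have hk2n : k2 = n := by omega
      rw [hk0, hk2n]
      rcases hn45 with h4 | h5
      · subst h4
        have h32 : (3:ℝ) ^ (a+1) = 3 ^ a * 3 := by
          rw [Real.rpow_add (by norm_num), Real.rpow_one]
        have hL2 := aux_L2 ha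
        push_cast
        norm_num
        nlinarith
      · have hle : (4:ℝ) ≤ (n:ℝ) - 1 := by
          have : (5:ℝ) ≤ (n:ℝ) := by exact_mod_cast h5
          linarith
        have h2c : (2:ℝ) ^ (a+1) ≤ ((n:ℝ) - 1) ^ a := two_rpow_le ha hle
        have hsplitpow : ((n:ℝ) - 1) ^ (a+1) = ((n:ℝ) - 1) ^ a * ((n:ℝ) - 1) := by
          rw [Real.rpow_add (by linarith), Real.rpow_one]
        have e1 : ((n:ℝ) - 1) * 2 ^ (a+1) ≤ ((n:ℝ) - 1) * ((n:ℝ) - 1) ^ a :=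
          mul_le_mul_of_nonneg_left h2c (by linarith)
        have e3 : ((n:ℝ) - 1) * ((n:ℝ) - 1) ^ a = ((n:ℝ) - 1) ^ (a+1) := by
          rw [hsplitpow]; ring
        push_cast
        nlinarith [e1, e3]
    · -- k ≥ 1
      have hkn : k ≤ n := by omega
      have hcast : (k:ℝ) + (k2:ℝ) = (n:ℝ) := by exact_mod_cast hkk2
      have hk1' : (1:ℝ) ≤ (k:ℝ) := by exact_mod_cast hk1
      have hbound : (k:ℝ) * 2 + (k2:ℝ) * 2 ^ (a+1)
          ≤ 2 + ((n:ℝ) - 1) * 2 ^ (a+1) := by nlinarith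
      have hfinal : 2 + ((n:ℝ) - 1) * 2 ^ (a+1)
          ≤ ((n:ℝ) - 1) ^ (a+1) + 2 ^ (a+1) + ((n:ℝ) - 1) := by
        have hn3c : (3:ℝ) ≤ (n:ℝ) := by exact_mod_cast hn3
        rcases Nat.lt_or_ge n 5 with hn5 | hn5
        · interval_cases n
          · -- n = 3
            push_cast
            norm_num
            linarith
          · -- n = 4
            have h32 : (3:ℝ) ^ (a+1) = 3 ^ a * 3 := by
              rw [Real.rpow_add (by norm_num), Real.rpow_one]
            have hL2 := aux_L2 ha
            have h13 : (1:ℝ) ≤ 3 ^ a := one_le_rpow' (by norm_num) (by linarith)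
            push_cast
            norm_num
            nlinarith
        · have hle : (4:ℝ) ≤ (n:ℝ) - 1 := by
            have : (5:ℝ) ≤ (n:ℝ) := by exact_mod_cast hn5
            linarith
          have h2c : (2:ℝ) ^ (a+1) ≤ ((n:ℝ) - 1) ^ a := two_rpow_le ha hle
          have hsplitpow : ((n:ℝ) - 1) ^ (a+1) = ((n:ℝ) - 1) ^ a * ((n:ℝ) - 1) := by
            rw [Real.rpow_add (by linarith), Real.rpow_one]
          nlinarith [mul_le_mul_of_nonneg_left h2c (show (0:ℝ) ≤ (n:ℝ) - 2 by linarith),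
            mul_le_mul_of_nonneg_right (show (n:ℝ) - 2 ≤ (n:ℝ) - 1 by linarith)
              (le_of_lt (pos_rpow_pos (show (0:ℝ) < (n:ℝ) - 1 by linarith) (a := a)))]
      calc (k:ℝ) * 2 + (k2:ℝ) * 2 ^ (a+1) ≤ 2 + ((n:ℝ) - 1) * 2 ^ (a+1) := hbound
        _ ≤ _ := hfinal

/-- for a connected unicyclic graph on `n ≥ 3` vertices (connected with
exactly one cycle, i.e. with exactly `n` edges), every orientation `D` satisfies
`R⁰_{a+1}(D) ≤ (1/2)((n-1)^(a+1) + n - 1 + 2^(a+1))` for all real `a ≥ 1`. -/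
theorem oriented_unicyclic_randic_le {V : Type*} [Fintype V] (G : SimpleGraph V) (n : ℕ)
    (hn : Fintype.card V = n) (hn3 : 3 ≤ n)
    (hconn : G.Connected) (huni : G.edgeSet.ncard = n)
    (D : G.Orientation) (a : ℝ) (ha : 1 ≤ a) :
    D.randic a ≤ (1 / 2) * (((n : ℝ) - 1) ^ (a + 1) + (n : ℝ) - 1 + (2 : ℝ) ^ (a + 1)) := by
  classical
  have hxy : (∑ v, D.outDeg v) = ∑ v, D.inDeg v := D.sum_outDeg_eq_sum_inDeg
  have hdegsum : (∑ v, (D.outDeg v + D.inDeg v)) = 2 * n := by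
    letI : DecidableRel G.Adj := Classical.decRel _
    have h2 : ∀ v : V, (G.neighborSet v).ncard = G.degree v := by
      intro v
      rw [← Nat.card_coe_set_eq, Nat.card_eq_fintype_card]
      exact G.card_neighborSet_eq_degree v
    have h3 := SimpleGraph.sum_degrees_eq_twice_card_edges G
    have h4 : G.edgeFinset.card = n := by
      rw [SimpleGraph.edgeFinset_card, ← Nat.card_eq_fintype_card, Nat.card_coe_set_eq]
      exact huni
    calc (∑ v, (D.outDeg v + D.inDeg v)) = ∑ v, (G.neighborSet v).ncard :=
          Finset.sum_congr rfl (fun v _ => D.outDeg_add_inDeg v)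
      _ = ∑ v, G.degree v := Finset.sum_congr rfl (fun v _ => h2 v)
      _ = 2 * G.edgeFinset.card := h3
      _ = 2 * n := by rw [h4]
  have hsum2 : (∑ v, D.outDeg v) + (∑ v, D.inDeg v) = 2 * n := by
    rw [← Finset.sum_add_distrib]; exact hdegsum
  have hx : (∑ v, D.outDeg v) = n := by omega
  have hy : (∑ v, D.inDeg v) = n := by omega
  have hrw : D.randic a = 1/2 * ∑ v, ((D.outDeg v : ℝ) ^ (a+1) + (D.inDeg v : ℝ) ^ (a+1)) := by
    simp only [SimpleGraph.Orientation.randic]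
    congr 1
    rw [Finset.sum_add_distrib]
    rw [D.sum_arc_fst (fun u => (D.outDeg u : ℝ) ^ a)]
    rw [D.sum_arc_snd (fun v => (D.inDeg v : ℝ) ^ a)]
    rw [← Finset.sum_add_distrib]
    refine Finset.sum_congr rfl (fun v _ => ?_)
    have hpow : ∀ m : ℕ, m • ((m:ℝ) ^ a) = (m:ℝ) ^ (a+1) := by
      intro m
      rcases Nat.eq_zero_or_pos m with rfl | hm
      · simp [Real.zero_rpow (show a + 1 ≠ 0 by linarith),
          Real.zero_rpow (show a ≠ 0 by linarith)]
      · have hm' : (0:ℝ) < m := by exact_mod_cast hm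
        rw [nsmul_eq_mul, Real.rpow_add hm', Real.rpow_one]; ring
    rw [hpow, hpow]
  rw [hrw]
  have hkey := key a ha n hn3 D hn hconn hx hy
  linarith
end

section
/- Let G₂ be the bowtie graph on 5 vertices consisting of two triangles sharing exactly one common vertex, let D be any orientation of G₂, and let a ≥ 1 be a real number. Then R⁰_{a+1}(D) ≤ 2·4^a + 2^{a+1} + 2. -/
section Aux

open Finset in
lemma bowtieAux_randic_eq {V : Type*} [Fintype V] {G : SimpleGraph V} (D : G.Orientation) (a : ℝ) :
    D.randic a = (1/2) * ∑ v : V, ((D.outDeg v : ℝ) * (D.outDeg v : ℝ) ^ a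
      + (D.inDeg v : ℝ) * (D.inDeg v : ℝ) ^ a) := by
  classical
  have houtc : ∀ u : V, D.outDeg u = (univ.filter (fun v => D.arc u v)).card := by
    intro u; rw [SimpleGraph.Orientation.outDeg, ← Set.ncard_coe_finset]; congr 1; ext v; simp
  have hinc : ∀ v : V, D.inDeg v = (univ.filter (fun u => D.arc u v)).card := by
    intro v; rw [SimpleGraph.Orientation.inDeg, ← Set.ncard_coe_finset]; congr 1; ext u; simp
  rw [SimpleGraph.Orientation.randic]
  congr 1
  rw [sum_filter, ← Finset.univ_product_univ, Finset.sum_product]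
  have split : ∀ u v : V,
      (if D.arc u v then (D.outDeg u : ℝ)^a + (D.inDeg v : ℝ)^a else 0)
      = (if D.arc u v then (D.outDeg u : ℝ)^a else 0)
        + (if D.arc u v then (D.inDeg v : ℝ)^a else 0) := by
    intro u v; split <;> simp
  simp only [split]
  simp only [Finset.sum_add_distrib]
  have h1 : ∀ u : V, (∑ v : V, if D.arc u v then (D.outDeg u:ℝ)^a else 0)
      = (D.outDeg u : ℝ) * (D.outDeg u : ℝ)^a := by
    intro u
    rw [← Finset.sum_filter, Finset.sum_const, nsmul_eq_mul, houtc u]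
  have h2 : ∀ v : V, (∑ u : V, if D.arc u v then (D.inDeg v:ℝ)^a else 0)
      = (D.inDeg v : ℝ) * (D.inDeg v : ℝ)^a := by
    intro v
    rw [← Finset.sum_filter, Finset.sum_const, nsmul_eq_mul, hinc v]
  have e2 : (∑ u : V, ∑ v : V, if D.arc u v then (D.inDeg v:ℝ)^a else 0)
      = ∑ v : V, (D.inDeg v:ℝ)*(D.inDeg v:ℝ)^a := by
    rw [Finset.sum_comm]; exact Finset.sum_congr rfl (fun v _ => h2 v)
  rw [e2]
  simp only [h1]

lemma bowtieAux_two_le_rpow (a : ℝ) (ha : 1 ≤ a) : (2:ℝ) ≤ (2:ℝ) ^ a := by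
  calc (2:ℝ) = 2 ^ (1:ℝ) := (Real.rpow_one 2).symm
  _ ≤ 2 ^ a := Real.rpow_le_rpow_of_exponent_le one_le_two ha

lemma bowtieAux_four_eq_rpow (a : ℝ) : (4:ℝ) ^ a = (2:ℝ)^a * (2:ℝ)^a := by
  rw [show (4:ℝ) = 2*2 by norm_num, Real.mul_rpow (by norm_num) (by norm_num)]

lemma bowtieAux_three_le_rpow (a : ℝ) (ha : 1 ≤ a) : (3:ℝ)^a ≤ (3/4) * (4:ℝ)^a := by
  have h1 : ((3/4 : ℝ))^a ≤ 3/4 := by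
    calc ((3/4:ℝ))^a ≤ (3/4:ℝ)^(1:ℝ) :=
      Real.rpow_le_rpow_of_exponent_ge (by norm_num) (by norm_num) ha
    _ = 3/4 := Real.rpow_one _
  have h2 : (3:ℝ)^a = (3/4:ℝ)^a * (4:ℝ)^a := by
    rw [← Real.mul_rpow (by norm_num) (by norm_num)]; norm_num
  rw [h2]
  exact mul_le_mul_of_nonneg_right h1 (Real.rpow_nonneg (by norm_num) a)

lemma bowtieAux_num_pair2 (a : ℝ) (ha : 1 ≤ a) (x y : ℕ) (h : x + y = 2) :
    (x:ℝ)*(x:ℝ)^a + (y:ℝ)*(y:ℝ)^a ≤ 2*(2:ℝ)^a := by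
  have h2 := bowtieAux_two_le_rpow a ha
  have h1 : (1:ℝ)^a = 1 := Real.one_rpow a
  have hcase : (x = 0 ∧ y = 2) ∨ (x = 1 ∧ y = 1) ∨ (x = 2 ∧ y = 0) := by omega
  rcases hcase with ⟨hx,hy⟩|⟨hx,hy⟩|⟨hx,hy⟩ <;> subst hx <;> subst hy <;> push_cast <;> linarith

lemma bowtieAux_num_mid4 (a : ℝ) (ha : 1 ≤ a) (x y : ℕ) (h : x + y = 4) (hx : 1 ≤ x) (hy : 1 ≤ y) :
    (x:ℝ)*(x:ℝ)^a + (y:ℝ)*(y:ℝ)^a ≤ 4*(4:ℝ)^a + 4 - 4*(2:ℝ)^a := by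
  have h2 := bowtieAux_two_le_rpow a ha
  have h4 := bowtieAux_four_eq_rpow a
  have h3 := bowtieAux_three_le_rpow a ha
  have h1 : (1:ℝ)^a = 1 := Real.one_rpow a
  have hcase : (x=1∧y=3)∨(x=2∧y=2)∨(x=3∧y=1) := by omega
  rcases hcase with ⟨hx,hy⟩|⟨hx,hy⟩|⟨hx,hy⟩ <;> subst hx <;> subst hy <;> push_cast <;>
    nlinarith [sq_nonneg ((2:ℝ)^a - 2), sq_nonneg ((2:ℝ)^a - 1)]

lemma bowtieAux_num_tri (a : ℝ) (ha : 1 ≤ a) (xu yu xv yv : ℕ) (h1 : xu + yu = 2) (h2 : xv + yv = 2)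
    (hyu : 1 ≤ yu) (hyv : 1 ≤ yv)
    (h : (1 ≤ xu ∧ 2 ≤ yv) ∨ (1 ≤ xv ∧ 2 ≤ yu)) :
    ((xu:ℝ)*(xu:ℝ)^a + (yu:ℝ)*(yu:ℝ)^a) + ((xv:ℝ)*(xv:ℝ)^a + (yv:ℝ)*(yv:ℝ)^a)
      ≤ 2*(2:ℝ)^a + 2 := by
  have h1' : (1:ℝ)^a = 1 := Real.one_rpow a
  rcases h with ⟨ha1, ha2⟩|⟨ha1, ha2⟩
  · have e : xu = 1 ∧ yu = 1 ∧ xv = 0 ∧ yv = 2 := by omega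
    obtain ⟨e1,e2,e3,e4⟩ := e; subst e1; subst e2; subst e3; subst e4
    push_cast; linarith
  · have e : xv = 1 ∧ yv = 1 ∧ xu = 0 ∧ yu = 2 := by omega
    obtain ⟨e1,e2,e3,e4⟩ := e; subst e1; subst e2; subst e3; subst e4
    push_cast; linarith

end Aux

/-- for the bowtie graph on 5 vertices (two triangles `{0,1,2}` and
`{2,3,4}` sharing the vertex `2`), every orientation `D` satisfies
`R⁰_{a+1}(D) ≤ 2·4^a + 2^(a+1) + 2` for all real `a ≥ 1`. -/
theorem bowtie_orientation_randic_le (G : SimpleGraph (Fin 5))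
    (hG : ∀ x y : Fin 5, G.Adj x y ↔
      (s(x, y) = s((0 : Fin 5), 1) ∨ s(x, y) = s((0 : Fin 5), 2) ∨
       s(x, y) = s((1 : Fin 5), 2) ∨ s(x, y) = s((2 : Fin 5), 3) ∨
       s(x, y) = s((2 : Fin 5), 4) ∨ s(x, y) = s((3 : Fin 5), 4)))
    (D : G.Orientation) (a : ℝ) (ha : 1 ≤ a) :
    D.randic a ≤ 2 * (4 : ℝ) ^ a + (2 : ℝ) ^ (a + 1) + 2 := by
  classical
  have hadj : ∀ x y : Fin 5, G.Adj x y ↔ (x, y) ∈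
      ({((0:Fin 5),(1:Fin 5)),(1,0),(0,2),(2,0),(1,2),(2,1),(2,3),(3,2),(2,4),(4,2),(3,4),(4,3)}
        : Finset (Fin 5 × Fin 5)) := by
    intro x y
    rw [hG]
    fin_cases x <;> fin_cases y <;> decide
  have houtc : ∀ u : Fin 5, D.outDeg u = (Finset.univ.filter (fun v => D.arc u v)).card := by
    intro u; rw [SimpleGraph.Orientation.outDeg, ← Set.ncard_coe_finset]; congr 1; ext v; simp
  have hinc : ∀ v : Fin 5, D.inDeg v = (Finset.univ.filter (fun u => D.arc u v)).card := by
    intro v; rw [SimpleGraph.Orientation.inDeg, ← Set.ncard_coe_finset]; congr 1; ext u; simp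
  have hb1out : ∀ u v : Fin 5, D.arc u v → 1 ≤ D.outDeg u := by
    intro u v h
    rw [houtc]
    exact Finset.one_le_card.mpr ⟨v, by simp [h]⟩
  have hb1in : ∀ u v : Fin 5, D.arc u v → 1 ≤ D.inDeg v := by
    intro u v h
    rw [hinc]
    exact Finset.one_le_card.mpr ⟨u, by simp [h]⟩
  have hb2out : ∀ u v w : Fin 5, v ≠ w → D.arc u v → D.arc u w → 2 ≤ D.outDeg u := by
    intro u v w hne h1 h2
    rw [houtc]
    have hsub : ({v, w} : Finset (Fin 5)) ⊆ Finset.univ.filter (fun z => D.arc u z) := by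
      intro z hz
      simp only [Finset.mem_insert, Finset.mem_singleton] at hz
      rcases hz with rfl|rfl <;> simp [h1, h2]
    calc 2 = ({v,w} : Finset (Fin 5)).card := (Finset.card_pair hne).symm
      _ ≤ _ := Finset.card_le_card hsub
  have hb2in : ∀ u v w : Fin 5, u ≠ w → D.arc u v → D.arc w v → 2 ≤ D.inDeg v := by
    intro u v w hne h1 h2
    rw [hinc]
    have hsub : ({u, w} : Finset (Fin 5)) ⊆ Finset.univ.filter (fun z => D.arc z v) := by
      intro z hz
      simp only [Finset.mem_insert, Finset.mem_singleton] at hz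
      rcases hz with rfl|rfl <;> simp [h1, h2]
    calc 2 = ({u,w} : Finset (Fin 5)).card := (Finset.card_pair hne).symm
      _ ≤ _ := Finset.card_le_card hsub
  have hdeg : ∀ v : Fin 5, D.outDeg v + D.inDeg v
      = (Finset.univ.filter (fun w => G.Adj v w)).card := by
    intro v
    rw [houtc, hinc, ← Finset.card_union_of_disjoint]
    · congr 1
      ext w
      simp only [Finset.mem_union, Finset.mem_filter, Finset.mem_univ, true_and]
      constructor
      · rintro (h|h)
        · exact D.adj_of_arc _ _ h
        · exact (D.adj_of_arc _ _ h).symm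
      · exact D.arc_total v w
    · rw [Finset.disjoint_left]
      intro z h1 h2
      simp only [Finset.mem_filter] at h1 h2
      exact D.arc_asymm _ _ h1.2 h2.2
  have hdegval : ∀ v : Fin 5, D.outDeg v + D.inDeg v = if v = 2 then 4 else 2 := by
    intro v
    rw [hdeg]
    have hfil : Finset.univ.filter (fun w => G.Adj v w)
        = Finset.univ.filter (fun w => (v, w) ∈
          ({((0:Fin 5),(1:Fin 5)),(1,0),(0,2),(2,0),(1,2),(2,1),(2,3),(3,2),(2,4),(4,2),(3,4),(4,3)}
            : Finset (Fin 5 × Fin 5))) := by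
      apply Finset.filter_congr
      intro w _
      simp [hadj]
    rw [hfil]
    rw [Finset.filter_congr_decidable]
    fin_cases v <;> decide
  have hA01 : G.Adj 0 1 := (hadj 0 1).mpr (by decide)
  have hA02 : G.Adj 0 2 := (hadj 0 2).mpr (by decide)
  have hA12 : G.Adj 1 2 := (hadj 1 2).mpr (by decide)
  have hA20 : G.Adj 2 0 := (hadj 2 0).mpr (by decide)
  have hA21 : G.Adj 2 1 := (hadj 2 1).mpr (by decide)
  have hA23 : G.Adj 2 3 := (hadj 2 3).mpr (by decide)
  have hA24 : G.Adj 2 4 := (hadj 2 4).mpr (by decide)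
  have hA34 : G.Adj 3 4 := (hadj 3 4).mpr (by decide)
  have hd0 : D.outDeg 0 + D.inDeg 0 = 2 := by have := hdegval 0; simpa using this
  have hd1 : D.outDeg 1 + D.inDeg 1 = 2 := by have := hdegval 1; simpa using this
  have hd2 : D.outDeg 2 + D.inDeg 2 = 4 := by have := hdegval 2; simpa using this
  have hd3 : D.outDeg 3 + D.inDeg 3 = 2 := by have := hdegval 3; simpa using this
  have hd4 : D.outDeg 4 + D.inDeg 4 = 2 := by have := hdegval 4; simpa using this
  rw [bowtieAux_randic_eq D a, Fin.sum_univ_five]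
  have h2a : (2:ℝ) ≤ (2:ℝ)^a := bowtieAux_two_le_rpow a ha
  have hpow : (2:ℝ)^(a+1) = 2^a * 2 := by
    rw [Real.rpow_add (by norm_num), Real.rpow_one]
  rw [hpow]
  rcases Nat.eq_zero_or_pos (D.outDeg 2) with h2z | h2pos
  · -- vertex 2 is a sink: all arcs point into 2
    have hnoout : ∀ v : Fin 5, ¬ D.arc 2 v := by
      intro v hv
      have := hb1out 2 v hv
      omega
    have a02 : D.arc 0 2 := by
      rcases D.arc_total 2 0 hA20 with h|h
      · exact absurd h (hnoout 0)
      · exact h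
    have a12 : D.arc 1 2 := by
      rcases D.arc_total 2 1 hA21 with h|h
      · exact absurd h (hnoout 1)
      · exact h
    have a32 : D.arc 3 2 := by
      rcases D.arc_total 2 3 hA23 with h|h
      · exact absurd h (hnoout 3)
      · exact h
    have a42 : D.arc 4 2 := by
      rcases D.arc_total 2 4 hA24 with h|h
      · exact absurd h (hnoout 4)
      · exact h
    have hT1 : ((D.inDeg 0:ℝ)*(D.inDeg 0:ℝ)^a + (D.outDeg 0:ℝ)*(D.outDeg 0:ℝ)^a)
        + ((D.inDeg 1:ℝ)*(D.inDeg 1:ℝ)^a + (D.outDeg 1:ℝ)*(D.outDeg 1:ℝ)^a)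
        ≤ 2*(2:ℝ)^a + 2 := by
      apply bowtieAux_num_tri a ha _ _ _ _ (by omega) (by omega)
        (hb1out 0 2 a02) (hb1out 1 2 a12)
      rcases D.arc_total 0 1 hA01 with h|h
      · exact Or.inr ⟨hb1in 0 1 h, hb2out 0 1 2 (by decide) h a02⟩
      · exact Or.inl ⟨hb1in 1 0 h, hb2out 1 0 2 (by decide) h a12⟩
    have hT2 : ((D.inDeg 3:ℝ)*(D.inDeg 3:ℝ)^a + (D.outDeg 3:ℝ)*(D.outDeg 3:ℝ)^a)
        + ((D.inDeg 4:ℝ)*(D.inDeg 4:ℝ)^a + (D.outDeg 4:ℝ)*(D.outDeg 4:ℝ)^a)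
        ≤ 2*(2:ℝ)^a + 2 := by
      apply bowtieAux_num_tri a ha _ _ _ _ (by omega) (by omega)
        (hb1out 3 2 a32) (hb1out 4 2 a42)
      rcases D.arc_total 3 4 hA34 with h|h
      · exact Or.inr ⟨hb1in 3 4 h, hb2out 3 4 2 (by decide) h a32⟩
      · exact Or.inl ⟨hb1in 4 3 h, hb2out 4 3 2 (by decide) h a42⟩
    have e1 : D.outDeg 2 = 0 := h2z
    have e2 : D.inDeg 2 = 4 := by omega
    rw [e1, e2]
    push_cast
    linarith [hT1, hT2]
  · rcases Nat.eq_zero_or_pos (D.inDeg 2) with h2z' | h2pos'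
    · -- vertex 2 is a source
      have hnoin : ∀ u : Fin 5, ¬ D.arc u 2 := by
        intro u hu
        have := hb1in u 2 hu
        omega
      have a20 : D.arc 2 0 := by
        rcases D.arc_total 2 0 hA20 with h|h
        · exact h
        · exact absurd h (hnoin 0)
      have a21 : D.arc 2 1 := by
        rcases D.arc_total 2 1 hA21 with h|h
        · exact h
        · exact absurd h (hnoin 1)
      have a23 : D.arc 2 3 := by
        rcases D.arc_total 2 3 hA23 with h|h
        · exact h
        · exact absurd h (hnoin 3)
      have a24 : D.arc 2 4 := by
        rcases D.arc_total 2 4 hA24 with h|h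
        · exact h
        · exact absurd h (hnoin 4)
      have hT1 : ((D.outDeg 0:ℝ)*(D.outDeg 0:ℝ)^a + (D.inDeg 0:ℝ)*(D.inDeg 0:ℝ)^a)
          + ((D.outDeg 1:ℝ)*(D.outDeg 1:ℝ)^a + (D.inDeg 1:ℝ)*(D.inDeg 1:ℝ)^a)
          ≤ 2*(2:ℝ)^a + 2 := by
        apply bowtieAux_num_tri a ha _ _ _ _ hd0 hd1 (hb1in 2 0 a20) (hb1in 2 1 a21)
        rcases D.arc_total 0 1 hA01 with h|h
        · exact Or.inl ⟨hb1out 0 1 h, hb2in 0 1 2 (by decide) h a21⟩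
        · exact Or.inr ⟨hb1out 1 0 h, hb2in 1 0 2 (by decide) h a20⟩
      have hT2 : ((D.outDeg 3:ℝ)*(D.outDeg 3:ℝ)^a + (D.inDeg 3:ℝ)*(D.inDeg 3:ℝ)^a)
          + ((D.outDeg 4:ℝ)*(D.outDeg 4:ℝ)^a + (D.inDeg 4:ℝ)*(D.inDeg 4:ℝ)^a)
          ≤ 2*(2:ℝ)^a + 2 := by
        apply bowtieAux_num_tri a ha _ _ _ _ hd3 hd4 (hb1in 2 3 a23) (hb1in 2 4 a24)
        rcases D.arc_total 3 4 hA34 with h|h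
        · exact Or.inl ⟨hb1out 3 4 h, hb2in 3 4 2 (by decide) h a24⟩
        · exact Or.inr ⟨hb1out 4 3 h, hb2in 4 3 2 (by decide) h a23⟩
      have e2 : D.inDeg 2 = 0 := h2z'
      have e1 : D.outDeg 2 = 4 := by omega
      rw [e1, e2]
      push_cast
      linarith [hT1, hT2]
    · -- vertex 2 has both in and out arcs
      have hm := bowtieAux_num_mid4 a ha (D.outDeg 2) (D.inDeg 2) hd2 h2pos h2pos'
      have hp0 := bowtieAux_num_pair2 a ha (D.outDeg 0) (D.inDeg 0) hd0
      have hp1 := bowtieAux_num_pair2 a ha (D.outDeg 1) (D.inDeg 1) hd1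
      have hp3 := bowtieAux_num_pair2 a ha (D.outDeg 3) (D.inDeg 3) hd3
      have hp4 := bowtieAux_num_pair2 a ha (D.outDeg 4) (D.inDeg 4) hd4
      linarith [hm, hp0, hp1, hp3, hp4]
end

section
/- For every real a ≥ 1 and every real d ≥ 3, one has 2^{a+1} + (d−1)^{a+1} − d^{a+1} − 1 < 0. -/
/-- for all reals `a ≥ 1` and `d ≥ 3`,
`2^(a+1) + (d-1)^(a+1) - d^(a+1) - 1 < 0`. -/
theorem rpow_diff_neg' (a d : ℝ) (ha : 1 ≤ a) (hd : 3 ≤ d) :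
    (2 : ℝ) ^ (a + 1) + (d - 1) ^ (a + 1) - d ^ (a + 1) - 1 < 0 := by
  set p := a + 1 with hp
  have hp2 : (2 : ℝ) ≤ p := by linarith
  have hd1 : (2 : ℝ) ≤ d - 1 := by linarith
  have hd1pos : (0 : ℝ) < d - 1 := by linarith
  -- Bernoulli: (1 + s)^p ≥ 1 + p s, s = 1/(d-1)
  have hs : (0:ℝ) ≤ 1 / (d - 1) := by positivity
  have hbern := one_add_mul_self_le_rpow_one_add (s := 1/(d-1)) (by linarith) (by linarith : 1 ≤ p)
  have heq : (1 + 1/(d-1)) = d / (d-1) := by field_simp; ring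
  rw [heq] at hbern
  have hdiv : (d / (d-1)) ^ p = d ^ p / (d-1) ^ p := by
    rw [Real.div_rpow (by linarith) (le_of_lt hd1pos)]
  rw [hdiv] at hbern
  have hpow_pos : (0:ℝ) < (d-1) ^ p := Real.rpow_pos_of_pos hd1pos p
  have key : (d-1)^p + p * (d-1)^p / (d-1) ≤ d ^ p := by
    have := mul_le_mul_of_nonneg_right hbern (le_of_lt hpow_pos)
    rw [div_mul_cancel₀ _ (ne_of_gt hpow_pos)] at this
    calc (d-1)^p + p * (d-1)^p / (d-1)
        = (1 + p * (1/(d-1))) * (d-1)^p := by ring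
      _ ≤ d ^ p := this
  -- p * (d-1)^p / (d-1) ≥ 2^p
  have h1 : (d-1) ^ p / (d-1) = (d-1) ^ (p - 1) := by
    rw [Real.rpow_sub hd1pos, Real.rpow_one]
  have h2 : (2:ℝ) ^ (p-1) ≤ (d-1) ^ (p-1) :=
    Real.rpow_le_rpow (by norm_num) hd1 (by linarith)
  have h3 : (2:ℝ) ^ p = 2 * 2 ^ (p-1) := by
    rw [← Real.rpow_one_add' (by norm_num) (by intro h; linarith)]
    ring_nf
  have h4 : (2:ℝ) ^ p ≤ p * (d-1)^p / (d-1) := by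
    rw [mul_div_assoc, h1, h3]
    have hpow1 : (0:ℝ) < (2:ℝ) ^ (p-1) := Real.rpow_pos_of_pos (by norm_num) _
    nlinarith
  linarith
end

section
/- For every real a ≥ 1, one has 5^{a+1} + 3^{a+1} + 2 ≥ 2·4^{a+1} + 2^{a+1}, with equality if and only if a = 1. -/
/-- for every real `a ≥ 1`,
`5^(a+1) + 3^(a+1) + 2 ≥ 2·4^(a+1) + 2^(a+1)`, with equality iff `a = 1`. -/
theorem rpow_ineq_16 (a : ℝ) (ha : 1 ≤ a) :
    (5 : ℝ) ^ (a + 1) + (3 : ℝ) ^ (a + 1) + 2 ≥ 2 * (4 : ℝ) ^ (a + 1) + (2 : ℝ) ^ (a + 1) ∧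
    ((5 : ℝ) ^ (a + 1) + (3 : ℝ) ^ (a + 1) + 2 = 2 * (4 : ℝ) ^ (a + 1) + (2 : ℝ) ^ (a + 1) ↔
      a = 1) := by
  set s : ℝ := a - 1 with hsdef
  have hs : (0:ℝ) ≤ s := by simp [hsdef]; linarith
  -- rewrite all rpows at a+1 in terms of s
  have hsplit : ∀ x : ℝ, 0 < x → x ^ (a + 1) = x ^ (2:ℕ) * x ^ s := by
    intro x hx
    rw [show a + 1 = (2:ℝ) + s by simp [hsdef]; ring, Real.rpow_add hx,
      ← Real.rpow_natCast x 2]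
    norm_num
  rw [hsplit 5 (by norm_num), hsplit 3 (by norm_num), hsplit 4 (by norm_num),
    hsplit 2 (by norm_num)]
  norm_num
  -- key AM-GM inequality
  have key : (4:ℝ) ^ s ≤ 25/32 * 5 ^ s + 5/32 * 3 ^ s + 2/32 := by
    have amgm := Real.geom_mean_le_arith_mean3_weighted
      (by norm_num : (0:ℝ) ≤ 25/32) (by norm_num : (0:ℝ) ≤ 5/32)
      (by norm_num : (0:ℝ) ≤ 2/32)
      (Real.rpow_nonneg (by norm_num : (0:ℝ) ≤ 5) s) (Real.rpow_nonneg (by norm_num : (0:ℝ) ≤ 3) s)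
      (zero_le_one) (by norm_num)
    rw [Real.one_rpow, mul_one, mul_one] at amgm
    refine le_trans ?_ amgm
    have h5 : ((5:ℝ) ^ s) ^ ((25:ℝ)/32) = ((5:ℝ) ^ (25:ℝ)) ^ (s/32) := by
      rw [← Real.rpow_mul (by norm_num), ← Real.rpow_mul (by norm_num)]
      ring_nf
    have h3 : ((3:ℝ) ^ s) ^ ((5:ℝ)/32) = ((3:ℝ) ^ (5:ℝ)) ^ (s/32) := by
      rw [← Real.rpow_mul (by norm_num), ← Real.rpow_mul (by norm_num)]
      ring_nf
    rw [h5, h3, ← Real.mul_rpow (Real.rpow_nonneg (by norm_num) _)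
      (Real.rpow_nonneg (by norm_num) _)]
    have h4 : (4:ℝ) ^ s = ((4:ℝ) ^ (32:ℝ)) ^ (s/32) := by
      rw [← Real.rpow_mul (by norm_num)]
      ring_nf
    rw [h4]
    apply Real.rpow_le_rpow (Real.rpow_nonneg (by norm_num) _) _ (by linarith)
    have e4 : (4:ℝ) ^ (32:ℝ) = (4:ℝ) ^ (32:ℕ) := by
      rw [← Real.rpow_natCast]; norm_num
    have e5 : (5:ℝ) ^ (25:ℝ) = (5:ℝ) ^ (25:ℕ) := by
      rw [← Real.rpow_natCast]; norm_num
    have e3 : (3:ℝ) ^ (5:ℝ) = (3:ℝ) ^ (5:ℕ) := by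
      rw [← Real.rpow_natCast]; norm_num
    rw [e4, e5, e3]
    norm_num
  have h23 : (2:ℝ) ^ s ≤ 3 ^ s :=
    Real.rpow_le_rpow (by norm_num) (by norm_num) hs
  constructor
  · linarith
  constructor
  · intro heq
    by_contra hne
    have hs' : 0 < s := by
      simp [hsdef]
      rcases lt_or_eq_of_le ha with h | h
      · linarith
      · exact absurd h.symm hne
    have h23' : (2:ℝ) ^ s < 3 ^ s :=
      Real.rpow_lt_rpow (by norm_num) (by norm_num) hs'
    linarith
  · intro h
    have : s = 0 := by simp [hsdef, h]
    rw [this]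
    norm_num
end
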